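/- arXiv:0712.0127 — 7 statements merged into one kernel-verified Lean document; each statement's English description precedes it below -/
import Mathlib

section
/- Let R be a commutative ring. Then every R-module is Gorenstein projective if and only if every R-module is Gorenstein injective. -/
open CategoryTheory
open CategoryTheory.Limits

universe u

/-- `Extⁿ_R(M, N) = 0`, using Mathlib's `Ext` functor on `ModuleCat R`. -/
def extVanishes (R : Type u) [CommRing R] (n : ℕ) (M N : Type u) [AddCommGroup M] [Module R M]
    [AddCommGroup N] [Module R N] : Prop :=
  Subsingleton (((Ext R (ModuleCat.{u} R) n).obj (Opposite.op (ModuleCat.of R M))).obj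
    (ModuleCat.of R N))

section Aux

variable (R : Type u) [CommRing R]

lemma subsingleton_of_retract {A B : ModuleCat.{u} R} (a : A ⟶ B) (b : B ⟶ A)
    (h : a ≫ b = 𝟙 A) (hB : Subsingleton B) : Subsingleton A := by
  constructor
  intro x y
  have hx := ConcreteCategory.congr_hom h x
  have hy := ConcreteCategory.congr_hom h y
  have hae : a x = a y := Subsingleton.elim _ _
  have hx' : b (a x) = x := by simpa using hx
  have hy' : b (a y) = y := by simpa using hy
  rw [← hx', hae, hy']

example (n : ℕ) (M N : Type u) [AddCommGroup M] [Module R M] [AddCommGroup N] [Module R N]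
  (i : M →ₗ[R] N) : (ModuleCat.of R M ⟶ ModuleCat.of R N) := ModuleCat.ofHom i

lemma extVanishes_of_retract_left (n : ℕ) {M N Q : Type u} [AddCommGroup M] [Module R M]
    [AddCommGroup N] [Module R N] [AddCommGroup Q] [Module R Q]
    (i : M →ₗ[R] N) (r : N →ₗ[R] M) (hri : r ∘ₗ i = LinearMap.id)
    (hN : extVanishes R n N Q) : extVanishes R n M Q := by
  let F := (Ext R (ModuleCat.{u} R) n).flip.obj (ModuleCat.of R Q)
  let iM : ModuleCat.of R M ⟶ ModuleCat.of R N := ModuleCat.ofHom i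
  let rM : ModuleCat.of R N ⟶ ModuleCat.of R M := ModuleCat.ofHom r
  have hir : iM ≫ rM = 𝟙 (ModuleCat.of R M) := by
    ext x; exact DFunLike.congr_fun hri x
  refine subsingleton_of_retract R (F.map (Quiver.Hom.op rM)) (F.map (Quiver.Hom.op iM)) ?_ hN
  rw [← F.map_comp, ← op_comp, hir, op_id, F.map_id]
  rfl

lemma extVanishes_of_retract_right (n : ℕ) {M N Q : Type u} [AddCommGroup M] [Module R M]
    [AddCommGroup N] [Module R N] [AddCommGroup Q] [Module R Q]
    (i : M →ₗ[R] N) (r : N →ₗ[R] M) (hri : r ∘ₗ i = LinearMap.id)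
    (hN : extVanishes R n Q N) : extVanishes R n Q M := by
  let F := (Ext R (ModuleCat.{u} R) n).obj (Opposite.op (ModuleCat.of R Q))
  let iM : ModuleCat.of R M ⟶ ModuleCat.of R N := ModuleCat.ofHom i
  let rM : ModuleCat.of R N ⟶ ModuleCat.of R M := ModuleCat.ofHom r
  have hir : iM ≫ rM = 𝟙 (ModuleCat.of R M) := by
    ext x; exact DFunLike.congr_fun hri x
  refine subsingleton_of_retract R (F.map iM) (F.map rM) ?_ hN
  rw [← F.map_comp, hir, F.map_id]

lemma extVanishes_of_projective (n : ℕ) {P Q : Type u} [AddCommGroup P] [Module R P]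
    [AddCommGroup Q] [Module R Q] (hP : Module.Projective R P) :
    extVanishes R (n + 1) P Q := by
  have : Projective (ModuleCat.of R P) := (IsProjective.iff_projective P).mp hP
  have hz := isZero_Ext_succ_of_projective (R := R) (C := ModuleCat.{u} R) (ModuleCat.of R P) (ModuleCat.of R Q) n
  have h0 := hz.eq_of_src (𝟙 _) 0
  constructor
  intro x y
  have hx := ConcreteCategory.congr_hom h0 x
  have hy := ConcreteCategory.congr_hom h0 y
  simpa using hx.trans hy.symm

section Core
variable {R}
variable {X Y : Type u} [AddCommGroup X] [Module R X] [AddCommGroup Y] [Module R Y]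

lemma extVanishes_one_iff (P : ProjectiveResolution (ModuleCat.of R X)) :
    extVanishes R 1 X Y ↔
      ∀ φ : P.complex.X 1 ⟶ ModuleCat.of R Y, P.complex.d 2 1 ≫ φ = 0 →
        ∃ ψ : P.complex.X 0 ⟶ ModuleCat.of R Y, P.complex.d 1 0 ≫ ψ = φ := by
  let K := P.complex.linearYonedaObj R (ModuleCat.of R Y)
  have h1 : extVanishes R 1 X Y ↔ IsZero (K.homology 1) := by
    constructor
    · intro h
      refine IsZero.of_iso ?_ (P.isoExt 1 (ModuleCat.of R Y)).symm
      exact @ModuleCat.isZero_of_subsingleton R _ _ h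
    · intro h
      have h' : IsZero (((Ext R (ModuleCat.{u} R) 1).obj
          (Opposite.op (ModuleCat.of R X))).obj (ModuleCat.of R Y)) :=
        IsZero.of_iso h (P.isoExt 1 (ModuleCat.of R Y))
      have h0 := h'.eq_of_src (𝟙 _) 0
      constructor
      intro x y
      have hx := ConcreteCategory.congr_hom h0 x
      have hy := ConcreteCategory.congr_hom h0 y
      simpa using hx.trans hy.symm
  have h2 : IsZero (K.homology 1) ↔ K.ExactAt 1 :=
    (K.exactAt_iff_isZero_homology 1).symm
  have h3 : K.ExactAt 1 ↔ (K.sc' 0 1 2).Exact :=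
    K.exactAt_iff' 0 1 2 (by simp) (by simp)
  rw [h1, h2, h3, (K.sc' 0 1 2).moduleCat_exact_iff]
  constructor
  · intro h φ hφ
    obtain ⟨ψ, hψ⟩ := h φ hφ
    exact ⟨ψ, hψ⟩
  · intro h φ hφ
    obtain ⟨ψ, hψ⟩ := h φ hφ
    exact ⟨ψ, hψ⟩

end Core

section Split
variable {R}
variable {X Y Z : Type u} [AddCommGroup X] [Module R X] [AddCommGroup Y] [Module R Y]
  [AddCommGroup Z] [Module R Z]

lemma factor_through_range {W : Type u} [AddCommGroup W] [Module R W] (ι : Y →ₗ[R] Z)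
    (hι : Function.Injective ι) (h : W →ₗ[R] Z) (hmem : ∀ x, h x ∈ LinearMap.range ι) :
    ∃ τ : W →ₗ[R] Y, ∀ x, ι (τ x) = h x := by
  let e := LinearEquiv.ofInjective ι hι
  refine ⟨e.symm.toLinearMap ∘ₗ h.codRestrict (LinearMap.range ι) hmem, fun x => ?_⟩
  have : e (e.symm ⟨h x, hmem x⟩) = ⟨h x, hmem x⟩ := e.apply_symm_apply _
  have h2 := congrArg Subtype.val this
  simpa [e, LinearEquiv.ofInjective_apply] using h2

/-- From a section of `p` one gets a retraction of `ι` in a short exact sequence. -/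
lemma retraction_of_section (ι : Y →ₗ[R] Z) (p : Z →ₗ[R] X) (hι : Function.Injective ι)
    (hrk : LinearMap.range ι = LinearMap.ker p) (s : X →ₗ[R] Z) (hs : p ∘ₗ s = LinearMap.id) :
    ∃ r : Z →ₗ[R] Y, r ∘ₗ ι = LinearMap.id := by
  let q : Z →ₗ[R] Z := LinearMap.id - s ∘ₗ p
  have hq : ∀ z, q z ∈ LinearMap.range ι := by
    intro z
    rw [hrk]
    simp only [q, LinearMap.mem_ker, LinearMap.sub_apply, LinearMap.id_apply,
      LinearMap.coe_comp, Function.comp_apply, map_sub]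
    have := DFunLike.congr_fun hs (p z)
    simp only [LinearMap.coe_comp, Function.comp_apply, LinearMap.id_apply] at this
    rw [this, sub_self]
  let e := LinearEquiv.ofInjective ι hι
  refine ⟨e.symm.toLinearMap ∘ₗ q.codRestrict (LinearMap.range ι) hq, ?_⟩
  ext y
  simp only [LinearMap.coe_comp, Function.comp_apply, LinearEquiv.coe_coe,
    LinearMap.codRestrict_apply, LinearMap.id_apply]
  have hqy : q (ι y) = ι y := by
    simp only [q, LinearMap.sub_apply, LinearMap.id_apply, LinearMap.coe_comp,
      Function.comp_apply]
    have : p (ι y) = 0 := by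
      rw [← LinearMap.mem_ker, ← hrk]; exact ⟨y, rfl⟩
    rw [this, map_zero, sub_zero]
  have : (⟨q (ι y), hq (ι y)⟩ : LinearMap.range ι) = e y := by
    apply Subtype.ext
    simp only [hqy, e, LinearEquiv.ofInjective_apply]
  rw [show (q.codRestrict (LinearMap.range ι) hq) (ι y) = ⟨q (ι y), hq (ι y)⟩ from rfl, this,
    LinearEquiv.symm_apply_apply]

/-- If `Ext¹(X, Y) = 0` then every short exact sequence `0 → Y → Z → X → 0` splits. -/
lemma section_of_extVanishes (hv : extVanishes R 1 X Y) (ι : Y →ₗ[R] Z) (p : Z →ₗ[R] X)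
    (hι : Function.Injective ι) (hp : Function.Surjective p)
    (hrk : LinearMap.range ι = LinearMap.ker p) :
    ∃ s : X →ₗ[R] Z, p ∘ₗ s = LinearMap.id := by
  have hpι : ∀ y, p (ι y) = 0 := by
    intro y
    rw [← LinearMap.mem_ker, ← hrk]
    exact ⟨y, rfl⟩
  let P := (HasProjectiveResolution.out (Z := ModuleCat.of R X)).some
  let d1 : ↥(P.complex.X 1) →ₗ[R] ↥(P.complex.X 0) := (P.complex.d 1 0).hom
  let d2 : ↥(P.complex.X 2) →ₗ[R] ↥(P.complex.X 1) := (P.complex.d 2 1).hom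
  let π0 : ↥(P.complex.X 0) →ₗ[R] X := (P.π.f 0).hom
  have hπ0 : Function.Surjective π0 :=
    (ModuleCat.epi_iff_surjective (P.π.f 0)).mp inferInstance
  haveI hproj : Module.Projective R ↥(P.complex.X 0) :=
    (IsProjective.iff_projective _).mpr (P.projective 0)
  obtain ⟨σ0, hσ0⟩ := Module.projective_lifting_property p π0 hp
  have hπd : ∀ x, π0 (d1 x) = 0 := fun x =>
    ConcreteCategory.congr_hom P.complex_d_comp_π_f_zero x
  have hdd : ∀ x, d1 (d2 x) = 0 := fun x =>
    ConcreteCategory.congr_hom (P.complex.d_comp_d 2 1 0) x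
  have hmem : ∀ x, σ0 (d1 x) ∈ LinearMap.range ι := by
    intro x
    rw [hrk, LinearMap.mem_ker]
    have := DFunLike.congr_fun hσ0 (d1 x)
    simp only [LinearMap.coe_comp, Function.comp_apply] at this
    rw [this, hπd]
  obtain ⟨τ, hτ⟩ := factor_through_range ι hι (σ0 ∘ₗ d1)
    (by intro x; exact hmem x)
  let τ' : P.complex.X 1 ⟶ ModuleCat.of R Y := ModuleCat.ofHom τ
  have hcocycle : P.complex.d 2 1 ≫ τ' = 0 := by
    ext x
    have h1 : ι (τ (d2 x)) = 0 := by
      rw [hτ (d2 x)]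
      simp only [LinearMap.coe_comp, Function.comp_apply]
      rw [hdd x, map_zero]
    have h2 : τ (d2 x) = 0 := hι (by rw [h1, map_zero])
    show τ (d2 x) = (0 : ↥(P.complex.X 2) →ₗ[R] Y) x
    rw [LinearMap.zero_apply]
    exact h2
  obtain ⟨ψ, hψ⟩ := (extVanishes_one_iff P).mp hv τ' hcocycle
  have hψ' : ∀ x, ψ (d1 x) = τ x := fun x => ConcreteCategory.congr_hom hψ x
  let σ : ↥(P.complex.X 0) →ₗ[R] Z := σ0 - ι ∘ₗ ψ.hom
  have hpσ : ∀ w, p (σ w) = π0 w := by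
    intro w
    simp only [σ, LinearMap.sub_apply, LinearMap.coe_comp, Function.comp_apply, map_sub]
    rw [hpι, sub_zero]
    exact DFunLike.congr_fun hσ0 w
  have hker : ∀ w, π0 w = 0 → σ w = 0 := by
    intro w hw
    obtain ⟨y, hy⟩ := (ShortComplex.moduleCat_exact_iff _).mp P.exact₀ w hw
    have hy' : d1 y = w := hy
    rw [← hy']
    simp only [σ, LinearMap.sub_apply, LinearMap.coe_comp, Function.comp_apply]
    rw [sub_eq_zero]
    exact ((congrArg ι (hψ' y)).trans (hτ y)).symm
  have hle : LinearMap.ker π0 ≤ LinearMap.ker σ := by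
    intro w hw
    exact hker w hw
  let e := π0.quotKerEquivOfSurjective hπ0
  have he : ∀ w, e (Submodule.Quotient.mk w) = π0 w := by
    intro w
    simp [e, LinearMap.quotKerEquivOfSurjective, LinearMap.quotKerEquivRange_apply_mk]
  refine ⟨(LinearMap.ker π0).liftQ σ hle ∘ₗ (e.symm : X →ₗ[R] _), ?_⟩
  ext x
  obtain ⟨w, rfl⟩ := hπ0 x
  have hsymm : e.symm (π0 w) = Submodule.Quotient.mk w := by
    apply e.injective
    rw [LinearEquiv.apply_symm_apply, he]
  simp only [LinearMap.coe_comp, Function.comp_apply, LinearMap.id_apply, LinearEquiv.coe_coe]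
  rw [hsymm, Submodule.liftQ_apply, hpσ]

end Split

section Crit
variable {R}

/-- `Ext¹(X, I) = 0` when `I` is injective. -/
lemma extVanishes_of_injective {X I : Type u} [AddCommGroup X] [Module R X]
    [AddCommGroup I] [Module R I] (hI : Module.Injective R I) :
    extVanishes R 1 X I := by
  let P := (HasProjectiveResolution.out (Z := ModuleCat.of R X)).some
  rw [extVanishes_one_iff P]
  intro φ hφ
  let d1 : ↥(P.complex.X 1) →ₗ[R] ↥(P.complex.X 0) := (P.complex.d 1 0).hom
  let d2 : ↥(P.complex.X 2) →ₗ[R] ↥(P.complex.X 1) := (P.complex.d 2 1).hom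
  let φ' : ↥(P.complex.X 1) →ₗ[R] I := φ.hom
  -- ker d1 ⊆ ker φ'
  have hsub : LinearMap.ker d1 ≤ LinearMap.ker φ' := by
    intro x hx
    obtain ⟨y, hy⟩ := (ShortComplex.moduleCat_exact_iff _).mp (P.exact_succ 0) x hx
    have hy' : d2 y = x := hy
    rw [LinearMap.mem_ker, ← hy']
    exact ConcreteCategory.congr_hom hφ y
  -- factor through the range of d1
  let e := d1.quotKerEquivRange
  let g0 : ↥(LinearMap.range d1) →ₗ[R] I :=
    ((LinearMap.ker d1).liftQ φ' hsub) ∘ₗ (e.symm : _ →ₗ[R] _)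
  obtain ⟨ψ, hψ⟩ := hI.out (LinearMap.range d1).subtype
    (Submodule.injective_subtype _) g0
  refine ⟨ModuleCat.ofHom ψ, ?_⟩
  ext x
  show ψ (d1 x) = φ' x
  have h1 : ψ ((LinearMap.range d1).subtype ⟨d1 x, ⟨x, rfl⟩⟩) = g0 ⟨d1 x, ⟨x, rfl⟩⟩ :=
    hψ ⟨d1 x, ⟨x, rfl⟩⟩
  have h2 : e.symm ⟨d1 x, ⟨x, rfl⟩⟩ = Submodule.Quotient.mk x := by
    apply e.injective
    rw [LinearEquiv.apply_symm_apply]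
    exact Subtype.ext (d1.quotKerEquivRange_apply_mk x).symm
  have h3 : g0 ⟨d1 x, ⟨x, rfl⟩⟩ = φ' x := by
    simp only [g0, LinearMap.coe_comp, Function.comp_apply, LinearEquiv.coe_coe]
    rw [h2, Submodule.liftQ_apply]
  exact h1.trans h3

/-- If `Ext¹(Q, X) = 0` for all `X`, then `Q` is projective. -/
lemma projective_of_extVanishes {Q : Type u} [AddCommGroup Q] [Module R Q]
    (h : ∀ (X : Type u) [AddCommGroup X] [Module R X], extVanishes R 1 Q X) :
    Module.Projective R Q := by
  classical
  let p : (Q →₀ R) →ₗ[R] Q := Finsupp.linearCombination R _root_.id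
  have hp : Function.Surjective p := by
    intro x
    exact ⟨Finsupp.single x 1, by simp [p]⟩
  let K := LinearMap.ker p
  obtain ⟨s, hs⟩ := section_of_extVanishes (h ↥K) K.subtype p
    (Submodule.injective_subtype K) hp (Submodule.range_subtype K)
  rw [Module.projective_def']
  exact ⟨s, hs⟩

/-- If `Ext¹(X, Q) = 0` for all `X`, then `Q` is injective. -/
lemma injective_of_extVanishes {Q : Type u} [AddCommGroup Q] [Module R Q]
    (h : ∀ (X : Type u) [AddCommGroup X] [Module R X], extVanishes R 1 X Q) :
    Module.Injective R Q := by
  apply Module.Baer.injective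
  intro J g
  -- pushout of J → R and g : J → Q
  let u : ↥J →ₗ[R] Q × R := LinearMap.prod g (-J.subtype)
  let W := (Q × R) ⧸ LinearMap.range u
  let mk : (Q × R) →ₗ[R] W := (LinearMap.range u).mkQ
  let ι : Q →ₗ[R] W := mk ∘ₗ LinearMap.inl R Q R
  let κ : R →ₗ[R] W := mk ∘ₗ LinearMap.inr R Q R
  have hι : Function.Injective ι := by
    rw [← LinearMap.ker_eq_bot, LinearMap.ker_eq_bot']
    intro q hq
    have : ((q, 0) : Q × R) ∈ LinearMap.range u := by
      rwa [← Submodule.Quotient.mk_eq_zero]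
    obtain ⟨a, ha⟩ := this
    have ha1 : g a = q := congrArg Prod.fst ha
    have ha2 : -(a : R) = 0 := congrArg Prod.snd ha
    have ha0 : a = 0 := by
      apply Subtype.ext
      simpa using ha2
    rw [← ha1, ha0, map_zero]
  let X := W ⧸ LinearMap.range ι
  let pr : W →ₗ[R] X := (LinearMap.range ι).mkQ
  obtain ⟨s, hs⟩ := section_of_extVanishes (h X) ι pr hι (Submodule.mkQ_surjective _)
    (Submodule.ker_mkQ _).symm
  obtain ⟨r, hr⟩ := retraction_of_section ι pr hι (Submodule.ker_mkQ _).symm s hs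
  refine ⟨r ∘ₗ κ, fun x hx => ?_⟩
  have key : κ x = ι (g ⟨x, hx⟩) := by
    have hmem : ((g ⟨x, hx⟩, -x) : Q × R) ∈ LinearMap.range u := ⟨⟨x, hx⟩, by simp [u]⟩
    have h0 : mk (g ⟨x, hx⟩, -x) = 0 := (Submodule.Quotient.mk_eq_zero _).mpr hmem
    have hsub : κ x - ι (g ⟨x, hx⟩) = - mk (g ⟨x, hx⟩, -x) := by
      simp only [κ, ι, LinearMap.comp_apply, LinearMap.inl_apply, LinearMap.inr_apply]
      rw [← map_neg, ← map_sub]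
      congr 1
      rw [Prod.neg_mk, Prod.mk_sub_mk]
      simp
    rw [h0, neg_zero, sub_eq_zero] at hsub
    exact hsub
  rw [LinearMap.comp_apply, key]
  exact DFunLike.congr_fun hr (g ⟨x, hx⟩)

end Crit

section Retract
variable {R}

lemma injective_of_retract {Q E : Type u} [AddCommGroup Q] [Module R Q] [AddCommGroup E]
    [Module R E] (hE : Module.Injective R E) (i : Q →ₗ[R] E) (r : E →ₗ[R] Q)
    (hri : r ∘ₗ i = LinearMap.id) : Module.Injective R Q := by
  constructor
  intro A B _ _ _ _ f hf g
  obtain ⟨h', hh'⟩ := hE.out f hf (i ∘ₗ g)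
  refine ⟨r ∘ₗ h', fun a => ?_⟩
  have h1 : h' (f a) = i (g a) := hh' a
  have h2 := DFunLike.congr_fun hri (g a)
  simp only [LinearMap.coe_comp, Function.comp_apply, LinearMap.id_apply] at h2 ⊢
  rw [h1, h2]

end Retract

end Aux

/-- An `R`-module `M` is strongly Gorenstein projective if there is a short exact sequence
`0 → M → P → M → 0` with `P` projective, and `Ext¹_R(M, Q) = 0` for every projective `Q`. -/
def IsStronglyGorensteinProjective (R : Type u) [CommRing R] (M : Type u) [AddCommGroup M]
    [Module R M] : Prop :=
  (∃ (P : ModuleCat.{u} R) (f : M →ₗ[R] P) (g : P →ₗ[R] M),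
      Module.Projective R P ∧ Function.Injective f ∧ Function.Surjective g ∧
      LinearMap.range f = LinearMap.ker g) ∧
  ∀ Q : ModuleCat.{u} R, Module.Projective R Q → extVanishes R 1 M Q

/-- An `R`-module is Gorenstein projective if it is a direct summand of a strongly Gorenstein
projective module. -/
def IsGorensteinProjective (R : Type u) [CommRing R] (M : Type u) [AddCommGroup M]
    [Module R M] : Prop :=
  ∃ (N : ModuleCat.{u} R) (i : M →ₗ[R] N) (r : N →ₗ[R] M),
    IsStronglyGorensteinProjective R N ∧ r ∘ₗ i = LinearMap.id

/-- An `R`-module `M` is strongly Gorenstein injective if there is a short exact sequence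
`0 → M → E → M → 0` with `E` injective, and `Ext¹_R(Q, M) = 0` for every injective `Q`. -/
def IsStronglyGorensteinInjective (R : Type u) [CommRing R] (M : Type u) [AddCommGroup M]
    [Module R M] : Prop :=
  (∃ (E : ModuleCat.{u} R) (f : M →ₗ[R] E) (g : E →ₗ[R] M),
      Module.Injective R E ∧ Function.Injective f ∧ Function.Surjective g ∧
      LinearMap.range f = LinearMap.ker g) ∧
  ∀ Q : ModuleCat.{u} R, Module.Injective R Q → extVanishes R 1 Q M

/-- An `R`-module is Gorenstein injective if it is a direct summand of a strongly Gorenstein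
injective module. -/
def IsGorensteinInjective (R : Type u) [CommRing R] (M : Type u) [AddCommGroup M]
    [Module R M] : Prop :=
  ∃ (N : ModuleCat.{u} R) (i : M →ₗ[R] N) (r : N →ₗ[R] M),
    IsStronglyGorensteinInjective R N ∧ r ∘ₗ i = LinearMap.id

/-- A ring is G-semisimple if every module over it is Gorenstein projective. -/
def GSemisimple (R : Type u) [CommRing R] : Prop :=
  ∀ M : ModuleCat.{u} R, IsGorensteinProjective R M

/-- A ring is SG-semisimple if every module over it is strongly Gorenstein projective. -/
def SGSemisimple (R : Type u) [CommRing R] : Prop :=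
  ∀ M : ModuleCat.{u} R, IsStronglyGorensteinProjective R M

/-- Every `R`-module is Gorenstein projective iff every `R`-module is Gorenstein injective. -/
theorem allGorensteinProjective_iff_allGorensteinInjective (R : Type u) [CommRing R] :
    (∀ M : ModuleCat.{u} R, IsGorensteinProjective R M) ↔
    (∀ M : ModuleCat.{u} R, IsGorensteinInjective R M) := by
  constructor
  · intro h M
    -- Ext¹(X, Q) = 0 for every X and every projective Q
    have hExt : ∀ (X : Type u) [AddCommGroup X] [Module R X], ∀ (Q : ModuleCat.{u} R),
        Module.Projective R Q → extVanishes R 1 X Q := by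
      intro X _ _ Q hQ
      obtain ⟨N, i, r, ⟨_, hext⟩, hri⟩ := h (ModuleCat.of R X)
      exact extVanishes_of_retract_left R 1 i r hri (hext Q hQ)
    -- every projective module is injective
    have hprojInj : ∀ (Q : ModuleCat.{u} R), Module.Projective R Q → Module.Injective R Q := by
      intro Q hQ
      exact injective_of_extVanishes (fun X _ _ => hExt X Q hQ)
    -- every injective module is projective
    have hinjProj : ∀ (Q : ModuleCat.{u} R), Module.Injective R Q → Module.Projective R Q := by
      intro Q hQ
      obtain ⟨N, i, r, ⟨⟨P, f, g, hP, hf, _, _⟩, _⟩, hri⟩ := h Q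
      have hi : Function.Injective i := by
        intro a b hab
        have ha := DFunLike.congr_fun hri a
        have hb := DFunLike.congr_fun hri b
        simp only [LinearMap.coe_comp, Function.comp_apply, LinearMap.id_apply] at ha hb
        rw [← ha, ← hb, hab]
      obtain ⟨t, ht⟩ := hQ.out (f ∘ₗ i) (hf.comp hi) LinearMap.id
      haveI : Module.Projective R ↥P := hP
      exact Module.Projective.of_split (f ∘ₗ i) t (by ext q; exact ht q)
    obtain ⟨N, i, r, ⟨⟨P, f, g, hP, hf, hg, hrange⟩, _⟩, hri⟩ := h M
    refine ⟨N, i, r, ⟨⟨P, f, g, hprojInj P hP, hf, hg, hrange⟩, ?_⟩, hri⟩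
    intro Q hQinj
    exact extVanishes_of_projective R 0 (hinjProj Q hQinj)
  · intro h M
    -- Ext¹(Q, X) = 0 for every X and every injective Q
    have hExt : ∀ (X : Type u) [AddCommGroup X] [Module R X], ∀ (Q : ModuleCat.{u} R),
        Module.Injective R Q → extVanishes R 1 Q X := by
      intro X _ _ Q hQ
      obtain ⟨N, i, r, ⟨_, hext⟩, hri⟩ := h (ModuleCat.of R X)
      exact extVanishes_of_retract_right R 1 i r hri (hext Q hQ)
    -- every injective module is projective
    have hinjProj : ∀ (Q : ModuleCat.{u} R), Module.Injective R Q → Module.Projective R Q := by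
      intro Q hQ
      exact projective_of_extVanishes (fun X _ _ => hExt X Q hQ)
    -- every projective module is injective
    have hprojInj : ∀ (Q : ModuleCat.{u} R), Module.Projective R Q → Module.Injective R Q := by
      intro Q hQ
      obtain ⟨N, i, r, ⟨⟨E, f, g, hE, _, hgs, _⟩, _⟩, hri⟩ := h Q
      have hr : Function.Surjective r := by
        intro q
        refine ⟨i q, ?_⟩
        have := DFunLike.congr_fun hri q
        simpa using this
      have hrg : Function.Surjective ((r : ↥N →ₗ[R] ↥Q) ∘ₗ g) := by
        intro q
        obtain ⟨n, hn⟩ := hr q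
        obtain ⟨e, he⟩ := hgs n
        exact ⟨e, by simp [he, hn]⟩
      haveI : Module.Projective R ↥Q := hQ
      obtain ⟨t, ht⟩ := Module.projective_lifting_property (r ∘ₗ g) LinearMap.id hrg
      exact injective_of_retract hE t (r ∘ₗ g) ht
    obtain ⟨N, i, r, ⟨⟨E, f, g, hE, hf, hg, hrange⟩, _⟩, hri⟩ := h M
    refine ⟨N, i, r, ⟨⟨E, f, g, hinjProj E hE, hf, hg, hrange⟩, ?_⟩, hri⟩
    intro Q hQproj
    exact extVanishes_of_injective (hprojInj Q hQproj)
end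

section
/- Let R be a commutative ring. If every R-module is Gorenstein projective, then every injective R-module is projective. -/
open CategoryTheory

universe u

/-- If every `R`-module is Gorenstein projective, then every injective `R`-module is
projective. -/
theorem injective_projective_of_allGorensteinProjective (R : Type u) [CommRing R]
    (h : ∀ M : ModuleCat.{u} R, IsGorensteinProjective R M) :
    ∀ M : ModuleCat.{u} R, Module.Injective R M → Module.Projective R M := by
  intro M hM
  obtain ⟨N, i, r, ⟨⟨P, f, g, hP, hf, -, -⟩, -⟩, hri⟩ := h M
  have hfi : Function.Injective (f ∘ₗ i) := by
    apply hf.comp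
    intro x y hxy
    have := congrArg r (hxy : i x = i y)
    simpa [← LinearMap.comp_apply, hri] using this
  obtain ⟨s, hs⟩ := hM.out (f ∘ₗ i) hfi LinearMap.id
  exact Module.Projective.of_split (f ∘ₗ i) s (by ext x; exact hs x)
end

section
/- A G-semisimple commutative ring R is semisimple if and only if it has finite global dimension, i.e., if and only if there exists a natural number n such that Ext^{n+1}_R(M, N) = 0 for all R-modules M and N. -/
open CategoryTheory

universe u

section Aux

open CategoryTheory

variable {R : Type u} [CommRing R]

lemma subsingleton_of_isZero {M : ModuleCat.{u} R} (h : Limits.IsZero M) : Subsingleton M := by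
  refine ⟨fun a b => ?_⟩
  have h0 : (𝟙 M : M ⟶ M) = 0 := h.eq_of_src _ _
  calc a = (𝟙 M : M ⟶ M) a := rfl
  _ = (0 : M ⟶ M) a := by rw [h0]
  _ = (𝟙 M : M ⟶ M) b := by rw [h0]; rfl
  _ = b := rfl

lemma proj_of_ss [IsSemisimpleRing R] (M : Type u) [AddCommGroup M] [Module R M] :
    Module.Projective R M := by
  set F := M →₀ R
  set π : F →ₗ[R] M := Finsupp.linearCombination R id
  have hπ : Function.Surjective π := fun m =>
    ⟨Finsupp.single m 1, by rw [Finsupp.linearCombination_single, one_smul]; rfl⟩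
  obtain ⟨q, hq⟩ := exists_isCompl (LinearMap.ker π)
  have hbij : Function.Bijective (π ∘ₗ q.subtype) := by
    constructor
    · intro x y hxy
      have hsub : (x : F) - y ∈ LinearMap.ker π ⊓ q := by
        refine ⟨LinearMap.mem_ker.mpr ?_, sub_mem x.2 y.2⟩
        rw [map_sub, sub_eq_zero]
        exact hxy
      rw [hq.inf_eq_bot] at hsub
      exact Subtype.ext (by simpa [sub_eq_zero] using hsub)
    · intro m
      obtain ⟨x, hx⟩ := hπ m
      have hx2 : x ∈ LinearMap.ker π ⊔ q := by rw [hq.sup_eq_top]; trivial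
      obtain ⟨y, hy, z, hz, rfl⟩ := Submodule.mem_sup.mp hx2
      exact ⟨⟨z, hz⟩, by simpa [LinearMap.mem_ker.mp hy] using hx⟩
  let e := LinearEquiv.ofBijective (π ∘ₗ q.subtype) hbij
  refine Module.Projective.of_split (M := F) (q.subtype ∘ₗ (e.symm : M →ₗ[R] q)) π ?_
  ext m
  exact e.apply_symm_apply m

lemma ss_of_all_proj (h : ∀ M : ModuleCat.{u} R, Module.Projective R M) :
    IsSemisimpleRing R := by
  refine { exists_isCompl := ?_ }
  intro I
  haveI : Module.Projective R (R ⧸ I) := h (ModuleCat.of R (R ⧸ I))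
  obtain ⟨s, hs⟩ := (I.mkQ).exists_rightInverse_of_surjective (Submodule.range_mkQ I)
  refine ⟨LinearMap.range s, ?_, ?_⟩
  · rw [disjoint_iff_inf_le]
    rintro x ⟨hxI, y, rfl⟩
    have h1 : I.mkQ (s y) = 0 := (Submodule.Quotient.mk_eq_zero I).mpr hxI
    rw [← LinearMap.comp_apply, hs] at h1
    have : y = 0 := h1
    simp [this]
  · rw [codisjoint_iff_le_sup]
    intro x _
    have h1 : I.mkQ (s (I.mkQ x)) = I.mkQ x := by
      have := LinearMap.ext_iff.mp hs (I.mkQ x)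
      simpa using this
    have h0 : I.mkQ (x - s (I.mkQ x)) = 0 := by rw [map_sub, h1, sub_self]
    have hmem : x - s (I.mkQ x) ∈ I := (Submodule.Quotient.mk_eq_zero I).mp h0
    have hx : x = (x - s (I.mkQ x)) + s (I.mkQ x) := by ring
    rw [hx]
    exact Submodule.add_mem_sup hmem ⟨_, rfl⟩

variable (N P : ModuleCat.{u} R) (f : N →ₗ[R] P) (g : P →ₗ[R] N)

/-- The periodic chain complex `⋯ → P → P → P` with differential `f ∘ₗ g`. -/
noncomputable def perComplex (hgf : g ∘ₗ f = 0) : ChainComplex (ModuleCat.{u} R) ℕ :=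
  ChainComplex.of (fun _ => P) (fun _ => ModuleCat.ofHom (f ∘ₗ g))
    (fun _ => by
      ext x
      show f (g (f (g x))) = 0
      have := LinearMap.ext_iff.mp hgf (g x)
      simp only [LinearMap.comp_apply, LinearMap.zero_apply] at this
      rw [this, map_zero])

lemma range_fg (hg : Function.Surjective g) :
    LinearMap.range (f ∘ₗ g) = LinearMap.range f := by
  rw [LinearMap.range_comp, LinearMap.range_eq_top.mpr hg, Submodule.map_top]

lemma ker_fg (hf : Function.Injective f) :
    LinearMap.ker (f ∘ₗ g) = LinearMap.ker g := by
  rw [LinearMap.ker_comp, LinearMap.ker_eq_bot.mpr hf, Submodule.comap_bot]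

lemma perComplex_exactAt_succ (hf : Function.Injective f) (hg : Function.Surjective g)
    (hfg : LinearMap.range f = LinearMap.ker g) (hgf : g ∘ₗ f = 0) (n : ℕ) :
    (perComplex N P f g hgf).ExactAt (n + 1) := by
  rw [HomologicalComplex.exactAt_iff' _ (n + 1 + 1) (n + 1) n (by simp) (by simp)]
  rw [ShortComplex.moduleCat_exact_iff_range_eq_ker]
  dsimp [HomologicalComplex.sc', HomologicalComplex.shortComplexFunctor']
  rw [show (perComplex N P f g hgf).d (n + 1 + 1) (n + 1) = ModuleCat.ofHom (f ∘ₗ g) from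
      ChainComplex.of_d (fun _ => P) (fun _ => ModuleCat.ofHom (f ∘ₗ g)) (n + 1),
    show (perComplex N P f g hgf).d (n + 1) n = ModuleCat.ofHom (f ∘ₗ g) from
      ChainComplex.of_d (fun _ => P) (fun _ => ModuleCat.ofHom (f ∘ₗ g)) n]
  show LinearMap.range (f ∘ₗ g) = LinearMap.ker (f ∘ₗ g)
  rw [range_fg N P f g hg, ker_fg N P f g hf, hfg]

/-- The periodic projective resolution of a strongly Gorenstein projective module. -/
noncomputable def perRes (hP : Module.Projective R P) (hf : Function.Injective f)
    (hg : Function.Surjective g) (hfg : LinearMap.range f = LinearMap.ker g)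
    (hgf : g ∘ₗ f = 0) : ProjectiveResolution N where
  complex := perComplex N P f g hgf
  projective := fun n =>
    ((IsProjective.iff_projective _).mp hP : Projective (ModuleCat.of R P))
  π := (ChainComplex.toSingle₀Equiv _ _).symm ⟨ModuleCat.ofHom g, by
    rw [show (perComplex N P f g hgf).d 1 0 = ModuleCat.ofHom (f ∘ₗ g) from
      ChainComplex.of_d (fun _ => P) (fun _ => ModuleCat.ofHom (f ∘ₗ g)) (0 : ℕ)]
    ext x
    show g (f (g x)) = 0
    have := LinearMap.ext_iff.mp hgf (g x)
    simpa using this⟩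
  quasiIso := ⟨fun n => by
    cases n with
    | zero =>
      rw [ChainComplex.quasiIsoAt₀_iff, ShortComplex.quasiIso_iff_of_zeros']
      · have hex : (ShortComplex.mk (ModuleCat.ofHom (f ∘ₗ g)) (ModuleCat.ofHom g)
            (by ext x; show g (f (g x)) = 0
                have := LinearMap.ext_iff.mp hgf (g x); simpa using this)).Exact := by
          rw [ShortComplex.moduleCat_exact_iff_range_eq_ker]
          show LinearMap.range (f ∘ₗ g) = LinearMap.ker g
          rw [range_fg N P f g hg, hfg]
        have hepi : Epi (ShortComplex.mk (ModuleCat.ofHom (f ∘ₗ g)) (ModuleCat.ofHom g)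
            (by ext x; show g (f (g x)) = 0
                have := LinearMap.ext_iff.mp hgf (g x); simpa using this)).g := by
          rw [ModuleCat.epi_iff_surjective]
          exact hg
        refine (ShortComplex.exact_and_epi_g_iff_of_iso ?_).2 ⟨hex, hepi⟩
        refine ShortComplex.isoMk (Iso.refl _) (Iso.refl _) (Iso.refl _) ?_ ?_
        · dsimp [perComplex, HomologicalComplex.shortComplexFunctor']
          erw [ChainComplex.of_d]
          simp
        · rfl
      all_goals rfl
    | succ n =>
      rw [quasiIsoAt_iff_exactAt']
      · exact perComplex_exactAt_succ N P f g hf hg hfg hgf n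
      · apply ChainComplex.exactAt_succ_single_obj⟩

lemma gorenstein_key (N : ModuleCat.{u} R) (hN : IsStronglyGorensteinProjective R N) (n : ℕ)
    (hext : extVanishes R (n + 1) N N) : Module.Projective R N := by
  obtain ⟨⟨P, f, g, hP, hf, hg, hfg⟩, -⟩ := hN
  have hgf : g ∘ₗ f = 0 := by
    ext y
    have hy : f y ∈ LinearMap.ker g := hfg ▸ LinearMap.mem_range_self f y
    simpa using hy
  let res := perRes N P f g hP hf hg hfg hgf
  haveI : Subsingleton (((Ext R (ModuleCat.{u} R) (n + 1)).obj (Opposite.op N)).obj N) := hext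
  have hz : Limits.IsZero (((perComplex N P f g hgf).linearYonedaObj R N).homology (n + 1)) :=
    (ModuleCat.isZero_of_subsingleton _).of_iso (res.isoExt (n + 1) N).symm
  have hexact : ((perComplex N P f g hgf).linearYonedaObj R N).ExactAt (n + 1) := by
    rw [HomologicalComplex.exactAt_iff_isZero_homology]
    exact hz
  rw [HomologicalComplex.exactAt_iff' _ n (n + 1) (n + 2) (by simp) (by simp),
    ShortComplex.moduleCat_exact_iff] at hexact
  have hd : ∀ (i j : ℕ) (φ : ((perComplex N P f g hgf).linearYonedaObj R N).X i),
      ((perComplex N P f g hgf).linearYonedaObj R N).d i j φ =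
        (perComplex N P f g hgf).d j i ≫ φ := fun i j φ => rfl
  obtain ⟨ψ, hψ⟩ := hexact (ModuleCat.ofHom g) (by
    show ((perComplex N P f g hgf).linearYonedaObj R N).d (n + 1) (n + 2) (ModuleCat.ofHom g) = 0
    erw [hd]; rw [show (perComplex N P f g hgf).d (n + 2) (n + 1) = ModuleCat.ofHom (f ∘ₗ g) from
      ChainComplex.of_d (fun _ => P) (fun _ => ModuleCat.ofHom (f ∘ₗ g)) (n + 1)]
    show ModuleCat.ofHom (g ∘ₗ (f ∘ₗ g)) = 0
    ext x
    show g (f (g x)) = 0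
    have := LinearMap.ext_iff.mp hgf (g x)
    simpa using this)
  have hψ' : ((perComplex N P f g hgf).linearYonedaObj R N).d n (n + 1) ψ = ModuleCat.ofHom g := hψ
  erw [hd] at hψ'; rw [show (perComplex N P f g hgf).d (n + 1) n = ModuleCat.ofHom (f ∘ₗ g) from
      ChainComplex.of_d (fun _ => P) (fun _ => ModuleCat.ofHom (f ∘ₗ g)) n] at hψ'
  have hsplit : (ψ.hom : ↑P →ₗ[R] ↑N) ∘ₗ f = LinearMap.id := by
    ext y
    obtain ⟨x, rfl⟩ := hg y
    have := LinearMap.ext_iff.mp (congrArg (fun (h : P ⟶ N) => (h.hom : ↑P →ₗ[R] ↑N)) hψ') x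
    exact this
  haveI : Module.Projective R ↑P := hP
  exact Module.Projective.of_split f (ψ.hom : ↑P →ₗ[R] ↑N) hsplit

end Aux

/-- A G-semisimple ring is semisimple iff it has finite global dimension, i.e. iff there is an
`n : ℕ` with `Ext^{n+1}(M, N) = 0` for all modules `M`, `N`. -/
theorem gSemisimple_semisimple_iff_finite_global_dimension (R : Type u) [CommRing R]
    (h : GSemisimple R) :
    IsSemisimpleRing R ↔ ∃ n : ℕ, ∀ M N : ModuleCat.{u} R, extVanishes R (n + 1) M N := by
  constructor
  · intro hss
    refine ⟨0, fun M N => ?_⟩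
    haveI hpm : Module.Projective R ↑M := proj_of_ss ↑M
    haveI : Projective (ModuleCat.of R ↑M) := (IsProjective.iff_projective _).mp hpm
    have hz := isZero_Ext_succ_of_projective (R := R) (ModuleCat.of R ↑M) (ModuleCat.of R ↑N) 0
    exact subsingleton_of_isZero hz
  · rintro ⟨n, hn⟩
    apply ss_of_all_proj
    intro M
    obtain ⟨N, i, r, hN, hri⟩ := h M
    haveI : Module.Projective R ↑N := gorenstein_key N hN n (hn N N)
    exact Module.Projective.of_split i r hri
end

section
/- Let R be a local commutative ring and let x ∈ R be a nonzero zero-divisor (i.e., x ≠ 0 and there exists y ≠ 0 with xy = 0). If the ideal xR is a strongly Gorenstein projective R-module, then the annihilator Ann(xR) is isomorphic to xR as an R-module, and consequently Ann(Ann(xR)) = Ann(xR). In particular, if xR equals the maximal ideal m of R, then Ann(m) = m. -/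
open CategoryTheory

universe u

/-- If `x` is a nonzero zero-divisor of a local commutative ring `R` such that the ideal `xR` is
strongly Gorenstein projective, then `Ann(xR) ≅ xR`, hence `Ann(Ann(xR)) = Ann(xR)`; in
particular if `xR = m` is the maximal ideal, then `Ann(m) = m`. -/
theorem ann_eq_of_span_sgProjective (R : Type u) [CommRing R] [IsLocalRing R]
    (x : R) (hx : x ≠ 0) (hzd : ∃ y : R, y ≠ 0 ∧ x * y = 0)
    (hSGP : IsStronglyGorensteinProjective R (Ideal.span {x} : Ideal R)) :
    Nonempty ((↥(Ideal.span {x} : Ideal R).annihilator) ≃ₗ[R] ↥(Ideal.span {x} : Ideal R)) ∧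
    (Ideal.span {x} : Ideal R).annihilator.annihilator =
      (Ideal.span {x} : Ideal R).annihilator ∧
    (Ideal.span {x} = IsLocalRing.maximalIdeal R →
      (IsLocalRing.maximalIdeal R).annihilator = IsLocalRing.maximalIdeal R) := by
  classical
  obtain ⟨y, hy, hxy⟩ := hzd
  set I : Ideal R := Ideal.span {x} with hIdef
  obtain ⟨⟨P, f, g, hP, hf, hg, hfg⟩, -⟩ := hSGP
  haveI : Module.Projective R P := hP
  -- the generator of M = ↥I
  set xM : ↥I := ⟨x, Ideal.subset_span rfl⟩ with hxMdef
  set u : R →ₗ[R] ↥I := LinearMap.toSpanSingleton R ↥I xM with hudef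
  have huval : ∀ r : R, ((u r : ↥I) : R) = r * x := fun r => rfl
  have husurj : Function.Surjective u := by
    rintro ⟨z, hz⟩
    obtain ⟨r, hr⟩ := Ideal.mem_span_singleton'.mp hz
    exact ⟨r, Subtype.ext (by simpa [huval] using hr)⟩
  have hku : ∀ r : R, u r = 0 ↔ r * x = 0 := by
    intro r
    constructor
    · intro h; have := congrArg Subtype.val h; simpa [huval] using this
    · intro h; exact Subtype.ext (by simpa [huval] using h)
  have hann : ∀ r : R, r ∈ I.annihilator ↔ r * x = 0 := by
    intro r
    rw [Submodule.mem_annihilator]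
    constructor
    · intro h
      simpa using h x (Ideal.subset_span rfl)
    · intro h n hn
      obtain ⟨c, hc⟩ := Ideal.mem_span_singleton'.mp hn
      rw [← hc, smul_eq_mul]
      calc r * (c * x) = c * (r * x) := by ring
      _ = 0 := by rw [h, mul_zero]
  have hyM : ∀ m : ↥I, y • m = (0 : ↥I) := by
    rintro ⟨z, hz⟩
    obtain ⟨r, hr⟩ := Ideal.mem_span_singleton'.mp hz
    apply Subtype.ext
    show y • z = 0
    rw [← hr, smul_eq_mul]
    calc y * (r * x) = r * (x * y) := by ring
    _ = 0 := by rw [hxy, mul_zero]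
  -- v : R → P lifting u through g
  obtain ⟨p₀, hp₀⟩ := hg xM
  set v : R →ₗ[R] P := LinearMap.toSpanSingleton R P p₀ with hvdef
  have hgv : ∀ r : R, g (v r) = u r := by
    intro r
    show g (r • p₀) = r • xM
    rw [map_smul, hp₀]
  -- w : P → R lifting g through u
  obtain ⟨w, hw⟩ := Module.projective_lifting_property u g husurj
  have hw' : ∀ p : P, u (w p) = g p := fun p => LinearMap.congr_fun hw p
  set s : R := w p₀ with hsdef
  have hannle : I.annihilator ≤ IsLocalRing.maximalIdeal R := by
    apply IsLocalRing.le_maximalIdeal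
    intro h
    exact hx (by simpa using (hann 1).mp (h ▸ Submodule.mem_top))
  have hs1 : (s - 1) ∈ I.annihilator := by
    rw [hann, sub_mul, one_mul, sub_eq_zero]
    have : u s = xM := by rw [hsdef, hw', hp₀]
    have := congrArg Subtype.val this
    simpa [huval] using this
  have hsu : IsUnit s := by
    by_contra hns
    have hmem : s ∈ IsLocalRing.maximalIdeal R := by
      rw [IsLocalRing.mem_maximalIdeal]; exact hns
    have h1 : (1 : R) ∈ IsLocalRing.maximalIdeal R := by
      have := Submodule.sub_mem _ hmem (hannle hs1)
      simpa using this
    exact (IsLocalRing.maximalIdeal.isMaximal R).ne_top (Ideal.eq_top_of_isUnit_mem _ h1 isUnit_one)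
  obtain ⟨s', hs'⟩ : ∃ s' : R, s' * s = 1 := ⟨↑hsu.unit⁻¹, hsu.unit.inv_mul⟩
  set ρ : P →ₗ[R] R := s' • w with hρdef
  have hρv : ∀ r : R, ρ (v r) = r := by
    intro r
    have h1 : w (v r) = r * s := by
      show w (r • p₀) = r * s
      rw [map_smul, smul_eq_mul, hsdef]
    show s' • w (v r) = r
    rw [h1, smul_eq_mul]
    calc s' * (r * s) = r * (s' * s) := by ring
    _ = r := by rw [hs', mul_one]
  have hvinj : Function.Injective v := by
    intro a b hab
    have := congrArg ρ hab
    rwa [hρv, hρv] at this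
  -- δ = (1 - vρ) ∘ f
  set δ : ↥I →ₗ[R] P := f - (v ∘ₗ ρ ∘ₗ f) with hδdef
  have hδval : ∀ m : ↥I, δ m = f m - v (ρ (f m)) := fun m => rfl
  have hδker : ∀ m : ↥I, ρ (δ m) = 0 := by
    intro m
    rw [hδval, map_sub, hρv, sub_self]
  set K : Submodule R P := LinearMap.ker ρ with hKdef
  set k₀ : ↥K := ⟨δ xM, hδker xM⟩ with hk₀def
  -- K is generated by k₀
  have hKcyc : ∀ p : ↥K, ∃ c : R, c • k₀ = p := by
    rintro ⟨p, hp⟩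
    have hρp : ρ p = 0 := hp
    obtain ⟨r, hr⟩ := husurj (g p)
    have hker : g (p - v r) = 0 := by rw [map_sub, hgv, hr, sub_self]
    have : p - v r ∈ LinearMap.range f := by rw [hfg]; exact hker
    obtain ⟨m, hm⟩ := this
    obtain ⟨c, hc⟩ := husurj m
    have hδm : δ m = p := by
      have hρfm : ρ (f m) = -r := by
        rw [hm, map_sub, hρp, hρv, zero_sub]
      rw [hδval, hρfm, map_neg, hm, sub_neg_eq_add, sub_add_cancel]
    have hc' : (c • xM : ↥I) = m := by
      rw [← LinearMap.toSpanSingleton_apply]; exact hc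
    refine ⟨c, Subtype.ext ?_⟩
    show c • (δ xM) = p
    calc c • (δ xM) = δ (c • xM) := (map_smul δ c xM).symm
    _ = δ m := by rw [hc']
    _ = p := hδm
  -- K is projective
  haveI hKproj : Module.Projective R ↥K := by
    have hmem : ∀ p : P, p - v (ρ p) ∈ K := by
      intro p
      show ρ (p - v (ρ p)) = 0
      rw [map_sub, hρv, sub_self]
    refine Module.Projective.of_split K.subtype
      (LinearMap.codRestrict K (LinearMap.id - (v ∘ₗ ρ)) hmem) ?_
    ext ⟨p, hp⟩
    have hρp : ρ p = 0 := hp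
    show p - v (ρ p) = p
    rw [hρp, map_zero, sub_zero]
  -- k₀ = 0 via idempotents
  have hk₀ : k₀ = 0 := by
    set πK : R →ₗ[R] ↥K := LinearMap.toSpanSingleton R ↥K k₀ with hπKdef
    have hπKsurj : Function.Surjective πK := fun p => hKcyc p
    obtain ⟨τ, hτ⟩ := Module.projective_lifting_property πK LinearMap.id hπKsurj
    have hτ' : ∀ p : ↥K, (τ p : R) • k₀ = p := fun p => LinearMap.congr_fun hτ p
    set c : R := τ k₀ with hcdef
    have hck : c • k₀ = k₀ := hτ' k₀
    have hcc : c * c = c := by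
      have : c * c = τ (c • k₀) := by rw [map_smul, smul_eq_mul]
      rw [this, hck]
    have hyk : y • k₀ = 0 := by
      apply Subtype.ext
      show y • (δ xM) = 0
      rw [← map_smul, hyM, map_zero]
    have hyc : y * c = 0 := by
      have : y * c = τ (y • k₀) := by rw [map_smul, smul_eq_mul]
      rw [this, hyk, map_zero]
    have hc0 : c = 0 := by
      rcases IsLocalRing.isUnit_or_isUnit_one_sub_self c with hcu | hcu
      · exfalso
        have : c = 1 := by
          have h2 : c * (c - 1) = 0 := by rw [mul_sub, hcc, mul_one, sub_self]
          have h3 : c - 1 = 0 := by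
            obtain ⟨d, hd⟩ : ∃ d : R, d * c = 1 := ⟨↑hcu.unit⁻¹, hcu.unit.inv_mul⟩
            calc c - 1 = (d * c) * (c - 1) := by rw [hd, one_mul]
            _ = d * (c * (c - 1)) := by ring
            _ = 0 := by rw [h2, mul_zero]
          exact sub_eq_zero.mp h3
        exact hy (by rw [← hyc, this, mul_one])
      · obtain ⟨d, hd⟩ : ∃ d : R, d * (1 - c) = 1 := ⟨↑hcu.unit⁻¹, hcu.unit.inv_mul⟩
        have h2 : c * (1 - c) = 0 := by rw [mul_sub, hcc, mul_one, sub_self]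
        calc c = c * (d * (1 - c)) := by rw [hd, mul_one]
        _ = d * (c * (1 - c)) := by ring
        _ = 0 := by rw [h2, mul_zero]
    rw [← hck, hc0, zero_smul]
  -- δ ≡ 0, so f lands in the image of v
  have hδ0 : ∀ m : ↥I, δ m = 0 := by
    intro m
    obtain ⟨c, hc⟩ := husurj m
    have : u c = c • xM := rfl
    rw [this] at hc
    rw [← hc, map_smul]
    have : δ xM = 0 := congrArg Subtype.val hk₀
    rw [this, smul_zero]
  set σ : ↥I →ₗ[R] R := ρ ∘ₗ f with hσdef
  have hvσ : ∀ m : ↥I, v (σ m) = f m := by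
    intro m
    have := hδ0 m
    rw [hδval] at this
    have := sub_eq_zero.mp this
    exact this.symm
  have hσinj : Function.Injective σ := by
    intro a b hab
    apply hf
    rw [← hvσ, ← hvσ, hab]
  have hσrange : LinearMap.range σ = Submodule.restrictScalars R I.annihilator := by
    apply le_antisymm
    · rintro _ ⟨m, rfl⟩
      show σ m ∈ I.annihilator
      rw [hann, ← huval (σ m)]
      have h1 : u (σ m) = g (v (σ m)) := (hgv (σ m)).symm
      have h2 : g (f m) = 0 := by
        have : f m ∈ LinearMap.ker g := hfg ▸ LinearMap.mem_range_self f m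
        exact this
      rw [hvσ] at h1
      rw [h1, h2]
      rfl
    · intro t ht
      have ht' : (t : R) * x = 0 := (hann t).mp ht
      have hut : u t = 0 := (hku t).mpr ht'
      have : v t ∈ LinearMap.range f := by
        rw [hfg]
        show g (v t) = 0
        rw [hgv, hut]
      obtain ⟨m, hm⟩ := this
      refine ⟨m, ?_⟩
      show σ m = t
      have : ρ (f m) = ρ (v t) := by rw [hm]
      rw [hρv] at this
      exact this
  -- the isomorphism
  have e1 : ↥I ≃ₗ[R] ↥(I.annihilator) :=
    (LinearEquiv.ofInjective σ hσinj).trans (LinearEquiv.ofEq _ _ hσrange)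
  have hg2 : I.annihilator.annihilator = I.annihilator := by
    apply le_antisymm
    · intro r hr
      rw [Submodule.mem_annihilator] at hr
      have ht₀ : σ xM ∈ I.annihilator := by
        have : σ xM ∈ LinearMap.range σ := LinearMap.mem_range_self σ xM
        rw [hσrange] at this
        exact this
      have h1 : r • σ xM = 0 := hr (σ xM) ht₀
      have h2 : σ (r • xM) = 0 := by rw [map_smul]; exact h1
      have h3 : r • xM = 0 := by
        apply hσinj
        rw [h2, map_zero]
      rw [hann, ← huval r]
      have : u r = r • xM := rfl
      rw [this, h3]
      rfl
    · intro r hr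
      rw [Submodule.mem_annihilator]
      intro t ht
      have : t ∈ LinearMap.range σ := by rw [hσrange]; exact ht
      obtain ⟨m, hm⟩ := this
      have hrm : r • m = 0 := by
        obtain ⟨z, hz⟩ := m
        obtain ⟨d, hd⟩ := Ideal.mem_span_singleton'.mp hz
        apply Subtype.ext
        show r • z = 0
        rw [← hd, smul_eq_mul]
        have hrx : r * x = 0 := (hann r).mp hr
        calc r * (d * x) = d * (r * x) := by ring
        _ = 0 := by rw [hrx, mul_zero]
      rw [← hm, smul_eq_mul, ← smul_eq_mul, ← map_smul, hrm, map_zero]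
  refine ⟨⟨e1.symm⟩, hg2, ?_⟩
  intro hIm
  rw [← hIm]
  apply le_antisymm
  · exact le_trans hannle (le_of_eq hIm.symm)
  · intro z hz
    rw [← hg2, Submodule.mem_annihilator]
    intro t ht
    rw [smul_eq_mul, mul_comm]
    exact (Submodule.mem_annihilator.mp ht) z hz
end

section
/- Let R be a local commutative ring and let I be a nonzero proper ideal of R. If R/I is a strongly Gorenstein projective R-module, then I is a principal ideal generated by a zero-divisor of R, and I is itself a strongly Gorenstein projective R-module. -/
open CategoryTheory

universe u

section Aux

variable (R : Type u) [CommRing R]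

lemma extVanishes_congr {M N : Type u} [AddCommGroup M] [Module R M]
    [AddCommGroup N] [Module R N] (e : M ≃ₗ[R] N) (n : ℕ) (Q : ModuleCat.{u} R)
    (h : extVanishes R n M Q) : extVanishes R n N Q := by
  unfold extVanishes at h ⊢
  haveI := h
  let i : ModuleCat.of R M ≅ ModuleCat.of R N := e.toModuleIso
  let j := ((Ext R (ModuleCat.{u} R) n).mapIso i.op).app Q
  exact @Equiv.subsingleton _ _ j.toLinearEquiv.toEquiv h

lemma sgp_congr {M N : Type u} [AddCommGroup M] [Module R M]
    [AddCommGroup N] [Module R N] (e : M ≃ₗ[R] N)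
    (h : IsStronglyGorensteinProjective R M) : IsStronglyGorensteinProjective R N := by
  obtain ⟨⟨P, f, g, hP, hf, hg, hfg⟩, hext⟩ := h
  refine ⟨⟨P, f ∘ₗ e.symm.toLinearMap, e.toLinearMap ∘ₗ g, hP, ?_, ?_, ?_⟩,
    fun Q hQ => extVanishes_congr R e 1 Q (hext Q hQ)⟩
  · exact hf.comp e.symm.injective
  · exact e.surjective.comp hg
  · rw [LinearMap.range_comp, LinearMap.ker_comp, LinearEquiv.range, Submodule.map_top,
      LinearEquiv.ker, Submodule.comap_bot, hfg]

end Aux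

/-- If `I` is a nonzero proper ideal of a local commutative ring `R` such that `R/I` is a
strongly Gorenstein projective `R`-module, then `I` is principal, generated by a zero-divisor,
and `I` is itself strongly Gorenstein projective. -/
theorem ideal_sgProjective_of_quotient_sgProjective (R : Type u) [CommRing R] [IsLocalRing R]
    (I : Ideal R) (hI0 : I ≠ ⊥) (hItop : I ≠ ⊤)
    (h : IsStronglyGorensteinProjective R (R ⧸ I)) :
    (∃ x : R, (∃ y : R, y ≠ 0 ∧ x * y = 0) ∧ I = Ideal.span {x}) ∧
    IsStronglyGorensteinProjective R I := by
  classical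
  obtain ⟨P, f, g, hPproj, hf, hg, hfg⟩ := h.1
  haveI : Module.Projective R P := hPproj
  -- lift the quotient map through g
  obtain ⟨h₀, hh₀⟩ := Module.projective_lifting_property g (I.mkQ) hg
  set q : P := f 1 with hqdef
  have hgq : g q = 0 := by
    have : q ∈ LinearMap.ker g := hfg ▸ LinearMap.mem_range_self f 1
    simpa using this
  have hsmul1 : ∀ r : R, r • (1 : R ⧸ I) = Ideal.Quotient.mk I r := by
    intro r
    rw [← map_one (Ideal.Quotient.mk I), ← Ideal.Quotient.mk_eq_mk,
      ← Submodule.Quotient.mk_smul, smul_eq_mul, mul_one, Ideal.Quotient.mk_eq_mk]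
  have hone : (⊤ : Submodule R (R ⧸ I)) = Submodule.span R {(1 : R ⧸ I)} := by
    refine le_antisymm (fun x _ => ?_) le_top
    obtain ⟨r, rfl⟩ := Ideal.Quotient.mk_surjective x
    exact Submodule.mem_span_singleton.2 ⟨r, hsmul1 r⟩
  have hker : LinearMap.ker g = Submodule.span R {q} := by
    rw [← hfg, ← Submodule.map_top, hone, Submodule.map_span, Set.image_singleton]
  have hannq : ∀ r : R, r • q = 0 ↔ r ∈ I := by
    intro r
    rw [hqdef, ← map_smul, hsmul1]
    constructor
    · intro h'
      exact Ideal.Quotient.eq_zero_iff_mem.1 (hf (by rw [h', map_zero]))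
    · intro h'
      rw [Ideal.Quotient.eq_zero_iff_mem.2 h', map_zero]
  -- the module is generated by two elements
  have hge : g (h₀ 1) = (1 : R ⧸ I) := by
    have := LinearMap.congr_fun hh₀ 1
    simpa [Submodule.mkQ_apply, Ideal.Quotient.mk_eq_mk] using this
  have hgen : ∀ p : P, ∃ r s : R, p = r • h₀ 1 + s • q := by
    intro p
    obtain ⟨r, hr⟩ := Ideal.Quotient.mk_surjective (g p)
    have hmem : p - r • h₀ 1 ∈ LinearMap.ker g := by
      rw [LinearMap.mem_ker, map_sub, map_smul, hge, hsmul1, hr, sub_self]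
    rw [hker] at hmem
    obtain ⟨s, hs⟩ := Submodule.mem_span_singleton.1 hmem
    exact ⟨r, s, by rw [hs]; abel⟩
  haveI : Module.Finite R P := by
    refine ⟨⟨{h₀ 1, q}, ?_⟩⟩
    refine le_antisymm le_top (fun p _ => ?_)
    obtain ⟨r, s, rfl⟩ := hgen p
    refine Submodule.add_mem _ (Submodule.smul_mem _ _ ?_) (Submodule.smul_mem _ _ ?_) <;>
      apply Submodule.subset_span <;> simp
  haveI : Module.FinitePresentation R P := Module.finitePresentation_of_projective R P
  haveI : Module.Free R P := Module.free_of_flat_of_isLocalRing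
  set b := Module.Free.chooseBasis R P with hb
  set ι := Module.Free.ChooseBasisIndex R P
  -- R/I is a local ring
  haveI : Nontrivial (R ⧸ I) := Ideal.Quotient.nontrivial_iff.mpr hItop
  haveI : IsLocalRing (R ⧸ I) := IsLocalRing.of_surjective' (Ideal.Quotient.mk I)
    Ideal.Quotient.mk_surjective
  have hsmulmul : ∀ (r : R) (x : R ⧸ I), r • x = Ideal.Quotient.mk I r * x := by
    intro r x
    obtain ⟨c, rfl⟩ := Ideal.Quotient.mk_surjective x
    rw [← map_mul, ← Ideal.Quotient.mk_eq_mk, ← Ideal.Quotient.mk_eq_mk,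
      ← Submodule.Quotient.mk_smul, smul_eq_mul]
  -- some basis vector has unit image
  have hexU : ∃ i : ι, IsUnit (g (b i)) := by
    by_contra hc
    push_neg at hc
    obtain ⟨p, hp⟩ := hg (1 : R ⧸ I)
    have hp' : g p = Finsupp.sum (b.repr p) fun j r => r • g (b j) := by
      conv_lhs => rw [← b.linearCombination_repr p]
      rw [Finsupp.linearCombination_apply, map_finsuppSum]
      simp only [map_smul]
    have h1mem : (1 : R ⧸ I) ∈ IsLocalRing.maximalIdeal (R ⧸ I) := by
      rw [← hp, hp']
      refine Submodule.finsuppSum_mem (R ⧸ I) (IsLocalRing.maximalIdeal (R ⧸ I)) (b.repr p)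
        (fun j r => r • g (b j)) (fun j _ => ?_)
      rw [hsmulmul]
      exact Ideal.mul_mem_left _ _ ((IsLocalRing.mem_maximalIdeal _).2 (mem_nonunits_iff.2 (hc j)))
    exact mem_nonunits_iff.1 ((IsLocalRing.mem_maximalIdeal _).1 h1mem) isUnit_one
  obtain ⟨i₀, hu⟩ := hexU
  set u := g (b i₀) with hudef
  set e₀ := b i₀ with he₀
  -- P is generated by e₀ and q
  have hgen2 : ∀ p : P, ∃ r s : R, p = r • e₀ + s • q := by
    intro p
    obtain ⟨r, hr⟩ := Ideal.Quotient.mk_surjective (g p * (↑hu.unit⁻¹ : R ⧸ I))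
    have : g (p - r • e₀) = 0 := by
      rw [map_sub, map_smul, hsmulmul, ← hudef, hr, mul_assoc, IsUnit.val_inv_mul, mul_one,
        sub_self]
    have hmem : p - r • e₀ ∈ LinearMap.ker g := this
    rw [hker] at hmem
    obtain ⟨s, hs⟩ := Submodule.mem_span_singleton.1 hmem
    exact ⟨r, s, by rw [hs]; abel⟩
  -- every index equals i₀
  have hj : ∀ j : ι, j = i₀ := by
    intro j
    by_contra hjne
    obtain ⟨r, s, hbj⟩ := hgen2 (b j)
    have hcoordj : (1 : R) = s * b.repr q j := by
      have := congrArg (fun p => b.repr p j) hbj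
      simpa [he₀, Module.Basis.repr_self, Finsupp.single_eq_same,
        Finsupp.single_eq_of_ne' (Ne.symm hjne)] using this
    obtain ⟨y, hyI, hy0⟩ := Submodule.exists_mem_ne_zero_of_ne_bot hI0
    have hyq : y • q = 0 := (hannq y).2 hyI
    have : y * b.repr q j = 0 := by
      have := congrArg (fun p => b.repr p j) hyq
      simpa using this
    exact hy0 (by
      calc y = y * (s * b.repr q j) := by rw [← hcoordj, mul_one]
      _ = s * (y * b.repr q j) := by ring
      _ = 0 := by rw [this, mul_zero])
  set a := b.repr q i₀ with ha
  have hrep : ∀ p : P, p = (b.repr p i₀) • e₀ := by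
    intro p
    conv_lhs => rw [← b.linearCombination_repr p, Finsupp.linearCombination_apply]
    rw [Finsupp.sum_eq_single i₀ (fun j _ hji₀ => absurd (hj j) hji₀) (fun _ => zero_smul R _)]
  have hq : q = a • e₀ := hrep q
  have hcoord : ∀ r s : R, r • e₀ = s • e₀ → r = s := by
    intro r s hrs
    have := congrArg (fun p => b.repr p i₀) hrs
    simpa [he₀, Module.Basis.repr_self, Finsupp.single_eq_same] using this
  have hrq : ∀ r : R, r • q = (r * a) • e₀ := by
    intro r; rw [hq, smul_smul]
  have hanna : ∀ r : R, r * a = 0 ↔ r ∈ I := by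
    intro r
    rw [← hannq r, hrq]
    constructor
    · intro h'; rw [h', zero_smul]
    · intro h'
      exact hcoord _ 0 (by rw [h', zero_smul])
  have haIn : a ∈ I := by
    have h0 : Ideal.Quotient.mk I a * u = 0 := by
      rw [← hsmulmul, ← map_smul, ← hq, hgq]
    rw [← Ideal.Quotient.eq_zero_iff_mem]
    exact (hu.mul_left_eq_zero).1 h0
  have hIa : I = Ideal.span {a} := by
    ext r
    constructor
    · intro hr
      have hg0 : g (r • e₀) = 0 := by
        rw [map_smul, hsmulmul, ← hudef,
          show (Ideal.Quotient.mk I r : R ⧸ I) = 0 from Ideal.Quotient.eq_zero_iff_mem.2 hr,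
          zero_mul]
      have hmem : r • e₀ ∈ LinearMap.ker g := hg0
      rw [hker] at hmem
      obtain ⟨s, hs⟩ := Submodule.mem_span_singleton.1 hmem
      rw [hrq] at hs
      exact Ideal.mem_span_singleton'.2 ⟨s, hcoord _ _ hs⟩
    · intro hr
      obtain ⟨c, rfl⟩ := Ideal.mem_span_singleton'.1 hr
      exact Ideal.mul_mem_left I c haIn
  constructor
  · obtain ⟨y, hyI, hy0⟩ := Submodule.exists_mem_ne_zero_of_ne_bot hI0
    exact ⟨a, ⟨y, hy0, by rw [mul_comm]; exact (hanna y).2 hyI⟩, hIa⟩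
  · set aI : I := ⟨a, haIn⟩ with haI
    set φ : R →ₗ[R] I := LinearMap.toSpanSingleton R I aI with hφ
    have hφval : ∀ r : R, (φ r : R) = r * a := fun r => by
      simp [hφ, LinearMap.toSpanSingleton_apply, haI, smul_eq_mul]
    have hkerφ : LinearMap.ker φ = I := by
      ext r
      rw [LinearMap.mem_ker, ← hanna r]
      constructor
      · intro h'
        have := congrArg (Subtype.val) h'
        rwa [hφval] at this
      · intro h'
        exact Subtype.ext (by rw [hφval]; exact h')
    have hsurjφ : Function.Surjective φ := by
      rintro ⟨x, hx⟩
      rw [hIa] at hx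
      obtain ⟨c, hc⟩ := Ideal.mem_span_singleton'.1 hx
      exact ⟨c, Subtype.ext (by rw [hφval]; exact hc)⟩
    set ψ : R ⧸ I →ₗ[R] I := Submodule.liftQ I φ (le_of_eq hkerφ.symm) with hψ
    have hinj : Function.Injective ψ := by
      rw [← LinearMap.ker_eq_bot, hψ]
      exact Submodule.ker_liftQ_eq_bot I φ _ (le_of_eq hkerφ)
    have hsurj : Function.Surjective ψ := by
      intro x
      obtain ⟨r, hr⟩ := hsurjφ x
      exact ⟨Submodule.Quotient.mk r, by rw [hψ, Submodule.liftQ_apply]; exact hr⟩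
    exact sgp_congr R (LinearEquiv.ofBijective ψ ⟨hinj, hsurj⟩) h
end

section
/- Let R be a local G-semisimple commutative ring. Then every R-module M is isomorphic to R^(I) ⊕ N for some index set I (where R^(I) denotes the free R-module on I) and some R-module N such that every element x of N has nonzero annihilator, i.e., for every x ∈ N there exists r ∈ R with r ≠ 0 and r • x = 0. -/
open CategoryTheory

universe u

theorem extVanishes_of_retract (R : Type u) [CommRing R] (M N Q : Type u) [AddCommGroup M] [Module R M]
    [AddCommGroup N] [Module R N] [AddCommGroup Q] [Module R Q]
    (i : M →ₗ[R] N) (r : N →ₗ[R] M) (hri : r ∘ₗ i = LinearMap.id)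
    (hN : extVanishes R 1 N Q) : extVanishes R 1 M Q := by
  let F := Ext R (ModuleCat.{u} R) 1
  let Mc := ModuleCat.of R M
  let Nc := ModuleCat.of R N
  let Qc := ModuleCat.of R Q
  have hcomp : (ModuleCat.ofHom i) ≫ (ModuleCat.ofHom r) = 𝟙 Mc := by
    rw [← ModuleCat.ofHom_comp, hri, ModuleCat.ofHom_id]
  haveI : Subsingleton ((F.obj (Opposite.op Nc)).obj Qc) := hN
  have key : (F.map ((ModuleCat.ofHom r).op)) ≫ (F.map ((ModuleCat.ofHom i).op)) = 𝟙 _ := by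
    rw [← F.map_comp, ← op_comp, hcomp, op_id, F.map_id]
  have key2 := congrArg (fun t => NatTrans.app t Qc) key
  simp only [NatTrans.comp_app] at key2
  constructor
  intro a b
  have ha := congrArg ((F.map ((ModuleCat.ofHom i).op)).app Qc)
    (Subsingleton.elim ((F.map ((ModuleCat.ofHom r).op)).app Qc a) ((F.map ((ModuleCat.ofHom r).op)).app Qc b))
  have h1 : ∀ x : (F.obj (Opposite.op Mc)).obj Qc,
      ((F.map ((ModuleCat.ofHom i).op)).app Qc) (((F.map ((ModuleCat.ofHom r).op)).app Qc) x) = x := by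
    intro x
    have := ConcreteCategory.congr_hom key2 x
    simpa using this
  rw [h1 a, h1 b] at ha
  exact ha


theorem exists_factor_of_surjective {R A B C : Type*} [CommRing R] [AddCommGroup A] [Module R A]
    [AddCommGroup B] [Module R B] [AddCommGroup C] [Module R C] (f : A →ₗ[R] B) (g : A →ₗ[R] C)
    (hf : Function.Surjective f) (hker : LinearMap.ker f ≤ LinearMap.ker g) :
    ∃ h : B →ₗ[R] C, h ∘ₗ f = g := by
  let e := f.quotKerEquivOfSurjective hf
  refine ⟨(LinearMap.ker f).liftQ g hker ∘ₗ e.symm.toLinearMap, ?_⟩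
  apply LinearMap.ext
  intro a
  have h1 : e.symm (f a) = Submodule.Quotient.mk a := by
    apply e.injective
    rw [e.apply_symm_apply]
    rfl
  show ((LinearMap.ker f).liftQ g hker) (e.symm (f a)) = g a
  rw [h1]
  rfl


theorem splitting_of_ext_vanish {R : Type u} [CommRing R] {M : Type u} [AddCommGroup M]
    [Module R M] (F : Submodule R M) (hext : extVanishes R 1 (M ⧸ F) F) :
    ∃ s : (M ⧸ F) →ₗ[R] M, F.mkQ ∘ₗ s = LinearMap.id := by
  classical
  let Cc : ModuleCat.{u} R := ModuleCat.of R (M ⧸ F)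
  let Fc : ModuleCat.{u} R := ModuleCat.of R F
  obtain ⟨P⟩ := (inferInstance : HasProjectiveResolution Cc).out
  -- homology of Hom(P, F) at 1 is subsingleton
  haveI hsub : Subsingleton ((P.complex.linearYonedaObj R Fc).homology 1) := by
    haveI : Subsingleton (((Ext R (ModuleCat.{u} R) 1).obj (Opposite.op Cc)).obj Fc) := hext
    have e := (P.isoExt (R := R) 1 Fc)
    constructor
    intro a b
    have : e.inv a = e.inv b := Subsingleton.elim _ _
    have h2 := congrArg e.hom this
    have h3 : ∀ x, e.hom (e.inv x) = x := fun x => by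
      have := ConcreteCategory.congr_hom e.inv_hom_id x
      simpa using this
    rwa [h3 a, h3 b] at h2
  let K := P.complex.linearYonedaObj R Fc
  have hK : K.ExactAt 1 := by
    rw [HomologicalComplex.exactAt_iff_isZero_homology]
    exact (ModuleCat.isZero_of_subsingleton _)
  have hexact := (HomologicalComplex.exactAt_iff' K 0 1 2 (by simp) (by simp)).mp hK
  have hconc := (ShortComplex.moduleCat_exact_iff _).mp hexact
  -- augmentation
  let e0 : ((ChainComplex.single₀ (ModuleCat.{u} R)).obj Cc).X 0 ≅ Cc :=
    HomologicalComplex.singleObjXSelf (ComplexShape.down ℕ) 0 Cc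
  let ε : P.complex.X 0 ⟶ Cc := P.π.f 0 ≫ e0.hom
  let πm : ModuleCat.of R M ⟶ Cc := ModuleCat.ofHom F.mkQ
  haveI : Epi πm := (ModuleCat.epi_iff_surjective _).mpr (Submodule.mkQ_surjective F)
  let α : P.complex.X 0 ⟶ ModuleCat.of R M := Projective.factorThru ε πm
  have hα : α ≫ πm = ε := Projective.factorThru_comp ε πm
  have hdε : P.complex.d 1 0 ≫ ε = 0 := by
    rw [show P.complex.d 1 0 ≫ ε = (P.complex.d 1 0 ≫ P.π.f 0) ≫ e0.hom from rfl,
      P.complex_d_comp_π_f_zero, Limits.zero_comp]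
  have hβmem : ∀ p : P.complex.X 1, (α.hom ∘ₗ (P.complex.d 1 0).hom) p ∈ F := by
    intro p
    rw [← Submodule.Quotient.mk_eq_zero F]
    have h1 : F.mkQ ((α.hom ∘ₗ (P.complex.d 1 0).hom) p) = ε (P.complex.d 1 0 p) :=
      ConcreteCategory.congr_hom hα (P.complex.d 1 0 p)
    have h2 : ε (P.complex.d 1 0 p) = 0 := by
      have := ConcreteCategory.congr_hom hdε p
      simpa using this
    exact h1.trans h2
  let β : P.complex.X 1 ⟶ Fc := ModuleCat.ofHom (LinearMap.codRestrict F (α.hom ∘ₗ (P.complex.d 1 0).hom) hβmem)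
  have hdtest : ∀ (φ : P.complex.X 1 ⟶ Fc), K.d 1 2 φ = P.complex.d 2 1 ≫ φ := by
    intro φ
    rfl
  have hcocycle : K.d 1 2 β = 0 := by
    rw [hdtest β]
    apply ModuleCat.hom_ext
    apply LinearMap.ext
    intro p
    apply Subtype.ext
    show α (P.complex.d 1 0 (P.complex.d 2 1 p)) = 0
    have : P.complex.d 1 0 (P.complex.d 2 1 p) = (P.complex.d 2 1 ≫ P.complex.d 1 0) p := rfl
    rw [this, P.complex.d_comp_d 2 1 0]
    exact map_zero _
  obtain ⟨ψ0, hψ0⟩ := hconc β hcocycle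
  let ψ : P.complex.X 0 ⟶ Fc := ψ0
  have hψ : P.complex.d 1 0 ≫ ψ = β := hψ0
  have hψ' : ∀ p : P.complex.X 1, ψ (P.complex.d 1 0 p) = β p := by
    intro p
    exact ConcreteCategory.congr_hom hψ p
  let αl : (P.complex.X 0 : Type u) →ₗ[R] M := by exact α.hom
  let ψl : (P.complex.X 0 : Type u) →ₗ[R] F := by exact ψ.hom
  let γ : (P.complex.X 0 : Type u) →ₗ[R] M := αl - F.subtype ∘ₗ ψl
  have hγd : ∀ p : P.complex.X 1, γ (P.complex.d 1 0 p) = 0 := by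
    intro p
    show αl (P.complex.d 1 0 p) - F.subtype (ψl (P.complex.d 1 0 p)) = 0
    have : ψl (P.complex.d 1 0 p) = β p := hψ' p
    rw [this]
    show α (P.complex.d 1 0 p) - α (P.complex.d 1 0 p) = 0
    exact sub_self _
  -- ε is surjective
  haveI : Epi ε := epi_comp _ _
  have hεsurj : Function.Surjective ε := (ModuleCat.epi_iff_surjective ε).mp inferInstance
  have hkerle : LinearMap.ker ε.hom ≤ LinearMap.ker γ := by
    intro x hx
    have hx' : ε x = 0 := hx
    have hπ0 : P.π.f 0 x = 0 := by
      have h4 : ∀ y, e0.inv (e0.hom y) = y := fun y => ConcreteCategory.congr_hom e0.hom_inv_id y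
      have : e0.inv (ε x) = P.π.f 0 x := h4 _
      rw [hx'] at this
      rw [← this]
      exact map_zero _
    obtain ⟨y, hy⟩ := (ShortComplex.moduleCat_exact_iff _).mp P.exact₀ x hπ0
    have hy' : P.complex.d 1 0 y = x := hy
    show γ x = 0
    rw [← hy']
    exact hγd y
  obtain ⟨s, hs⟩ := exists_factor_of_surjective
    ε.hom γ hεsurj hkerle
  refine ⟨s, ?_⟩
  apply LinearMap.ext
  intro c
  obtain ⟨p, rfl⟩ := hεsurj c
  have h5 : s (ε p) = γ p := DFunLike.congr_fun hs p
  show F.mkQ (s (ε p)) = ε p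
  rw [h5]
  show F.mkQ (αl p - F.subtype (ψl p)) = ε p
  rw [map_sub]
  have h6 : F.mkQ (αl p) = ε p := ConcreteCategory.congr_hom hα p
  have h7 : F.mkQ (F.subtype (ψl p)) = 0 := (Submodule.Quotient.mk_eq_zero F).mpr (ψl p).2
  rw [h6, h7, sub_zero]

/-- splitting equiv from a section of the quotient map -/
noncomputable def equivOfSection {R : Type u} [CommRing R] {M : Type u} [AddCommGroup M]
    [Module R M] (F : Submodule R M) (s : (M ⧸ F) →ₗ[R] M)
    (hs : F.mkQ ∘ₗ s = LinearMap.id) : M ≃ₗ[R] (F × (M ⧸ F)) := by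
  have hs' : ∀ y, F.mkQ (s y) = y := fun y => DFunLike.congr_fun hs y
  let t : M →ₗ[R] M := LinearMap.id - s ∘ₗ F.mkQ
  have hmem : ∀ x : M, t x ∈ F := by
    intro x
    rw [← Submodule.Quotient.mk_eq_zero F]
    show F.mkQ (x - s (F.mkQ x)) = 0
    rw [map_sub, hs', sub_self]
  refine LinearEquiv.ofLinear
    ((LinearMap.codRestrict F t hmem).prod F.mkQ)
    (F.subtype ∘ₗ LinearMap.fst R F (M ⧸ F) + s ∘ₗ LinearMap.snd R F (M ⧸ F)) ?_ ?_
  · apply LinearMap.ext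
    rintro ⟨f, c⟩
    have h1 : F.mkQ ((f : M) + s c) = c := by
      rw [map_add, hs', Submodule.mkQ_apply, (Submodule.Quotient.mk_eq_zero F).mpr f.2, zero_add]
    refine Prod.ext (Subtype.ext ?_) ?_
    · show ((f : M) + s c) - s (F.mkQ ((f : M) + s c)) = (f : M)
      rw [h1]
      abel
    · exact h1
  · apply LinearMap.ext
    intro x
    show (x - s (F.mkQ x)) + s (F.mkQ x) = x
    abel

/-- Over a local G-semisimple commutative ring, every module is isomorphic to `R^(I) ⊕ N` where
every element of `N` has a nonzero annihilator. -/
theorem module_decomposition_of_local_gSemisimple (R : Type u) [CommRing R] [IsLocalRing R]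
    (h : GSemisimple R) (M : Type u) [AddCommGroup M] [Module R M] :
    ∃ (ι : Type u) (N : Type u) (_ : AddCommGroup N) (_ : Module R N),
      (∀ x : N, ∃ r : R, r ≠ 0 ∧ r • x = 0) ∧ Nonempty (M ≃ₗ[R] ((ι →₀ R) × N)) := by
  have hsplit : ∀ (F : Submodule R M), Module.Projective R F →
      ∃ s : (M ⧸ F) →ₗ[R] M, F.mkQ ∘ₗ s = LinearMap.id := by
    intro F hproj
    apply splitting_of_ext_vanish
    obtain ⟨N', i, r, hN', hri⟩ := h (ModuleCat.of R (M ⧸ F))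
    exact extVanishes_of_retract R (M ⧸ F) N' F i r hri (hN'.2 (ModuleCat.of R F) hproj)
  classical
  obtain ⟨S, hSmax⟩ := zorn_subset {s : Set M | LinearIndependent R (fun x : s => (x : M))}
    (fun c hcS hchain => ⟨⋃₀ c, linearIndepOn_sUnion_of_directed (v := id) hchain.directedOn
      (fun a ha => hcS ha), fun s hs => Set.subset_sUnion_of_mem hs⟩)
  have hSind : LinearIndependent R (fun x : S => (x : M)) := hSmax.1
  set F : Submodule R M := Submodule.span R S with hF
  have eqS : Submodule.span R (Set.range (fun x : S => (x : M))) = F := by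
    rw [Subtype.range_coe]
  let b : Module.Basis S R F := (Module.Basis.span hSind).map (LinearEquiv.ofEq _ _ eqS)
  haveI : Module.Free R F := Module.Free.of_basis b
  obtain ⟨s, hs⟩ := hsplit F inferInstance
  have hs' : ∀ y, F.mkQ (s y) = y := fun y => DFunLike.congr_fun hs y
  refine ⟨↥S, M ⧸ F, inferInstance, inferInstance, ?_, ⟨(equivOfSection F s hs).trans
    (b.repr.prodCongr (LinearEquiv.refl R (M ⧸ F)))⟩⟩
  intro x
  by_contra hcon
  push_neg at hcon
  have hx0 : ∀ a : R, a • x = 0 → a = 0 := by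
    intro a ha
    by_contra hne
    exact hcon a hne ha
  have hxne : x ≠ 0 := by
    intro h0
    exact one_ne_zero (hx0 1 (by rw [h0, smul_zero]))
  set m : M := s x with hm
  have hπm : F.mkQ m = x := hs' x
  have hmnotS : m ∉ S := by
    intro hmem
    apply hxne
    rw [← hπm, Submodule.mkQ_apply, Submodule.Quotient.mk_eq_zero]
    exact Submodule.subset_span hmem
  -- insert m S is linearly independent
  have hins : LinearIndependent R (fun x : (insert m S : Set M) => (x : M)) := by
    apply (linearIndepOn_iff (v := id) (s := insert m S)).mpr
    intro l hl hl0
    have hlm : l m = 0 := by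
      apply hx0
      have h1 : l = Finsupp.single m (l m) + l.erase m := (Finsupp.single_add_erase m l).symm
      have h2 : Finsupp.linearCombination R id (l.erase m) ∈ F := by
        rw [Finsupp.linearCombination_apply]
        apply Submodule.sum_smul_mem
        intro a ha
        have haS : a ∈ S := by
          have hne : a ≠ m := by
            intro h
            subst h
            exact (Finsupp.mem_support_iff.mp ha) Finsupp.erase_same
          have h3 : a ∈ l.support := by
            rw [Finsupp.mem_support_iff] at ha ⊢
            rwa [Finsupp.erase_ne hne] at ha
          rcases hl h3 with h4 | h4
          · exact absurd h4 hne
          · exact h4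
        exact Submodule.subset_span haS
      have h5 : Finsupp.linearCombination R id l
          = l m • m + Finsupp.linearCombination R id (l.erase m) := by
        conv_lhs => rw [h1]
        rw [map_add, Finsupp.linearCombination_single]
        rfl
      have h6 := congrArg F.mkQ (h5 ▸ hl0)
      rw [map_add, map_smul, hπm, Submodule.mkQ_apply,
        (Submodule.Quotient.mk_eq_zero F).mpr h2, add_zero, map_zero] at h6
      exact h6
    have hlS : l ∈ Finsupp.supported R R S := by
      intro a ha
      rcases hl ha with h | h
      · subst h
        exact absurd hlm (Finsupp.mem_support_iff.mp ha)
      · exact h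
    exact ((linearIndepOn_iff (v := id)).mp hSind) l hlS hl0
  have : (insert m S : Set M) ⊆ S := hSmax.2 hins (Set.subset_insert m S)
  exact hmnotS (this (Set.mem_insert m S))
end

section
/- Let R be a principal ideal domain and let p be a nonzero prime ideal of R. Then the quotient ring R/p² is a local SG-semisimple ring. -/
open CategoryTheory

universe u

section Aux

variable {S : Type u} [CommRing S]

/-- Divide a finitely supported family by `ε` when every value lies in `(ε)`. -/
lemma finsupp_eps_divide (ε : S) {X : Type u} (a : X →₀ S)
    (h : ∀ x, a x ∈ Ideal.span {ε}) : ∃ d : X →₀ S, a = ε • d := by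
  classical
  have hch : ∀ x : X, ∃ c : S, a x = ε * c := by
    intro x
    obtain ⟨c, hc⟩ := Ideal.mem_span_singleton'.mp (h x)
    exact ⟨c, by rw [← hc, mul_comm]⟩
  refine ⟨Finsupp.onFinset a.support
    (fun x => if hx : a x = 0 then 0 else Classical.choose (hch x)) ?_, ?_⟩
  · intro x hx
    rw [Finsupp.mem_support_iff]
    intro h0
    simp [h0] at hx
  · ext x
    rw [Finsupp.smul_apply, Finsupp.onFinset_apply]
    by_cases hx : a x = 0
    · simp [hx]
    · rw [dif_neg hx, smul_eq_mul, ← Classical.choose_spec (hch x)]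

/-- surjectivity of `Finsupp.mapRange` -/
lemma mapRange_linearMap_surjective {A B : Type u} [AddCommGroup A] [AddCommGroup B]
    [Module S A] [Module S B] (f : A →ₗ[S] B) (hf : Function.Surjective f) (J : Type u) :
    Function.Surjective (Finsupp.mapRange.linearMap (α := J) f) := by
  classical
  intro y
  induction y using Finsupp.induction with
  | zero => exact ⟨0, by simp⟩
  | single_add j b v _ _ ih =>
    obtain ⟨x, hx⟩ := ih
    obtain ⟨a, rfl⟩ := hf b
    refine ⟨Finsupp.single j a + x, ?_⟩
    rw [map_add, hx]
    congr 1
    exact Finsupp.mapRange_single (hf := map_zero f)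

lemma exists_basis_family (ε : S) (hmax : (Ideal.span {ε}).IsMaximal)
    (N : Type u) [AddCommGroup N] [Module S N] (tor : ∀ n : N, ε • n = 0) :
    ∃ (ι : Type u) (v : ι → N), Submodule.span S (Set.range v) = ⊤ ∧
      ∀ c : ι →₀ S, (c.sum fun i a => a • v i) = 0 → ∀ i, c i ∈ Ideal.span {ε} := by
  classical
  have htor : Module.IsTorsionBySet S N (Ideal.span {ε} : Ideal S) := by
    intro n s
    obtain ⟨c, hc⟩ := Ideal.mem_span_singleton'.mp s.2
    rw [← hc, mul_smul]
    rw [tor n, smul_zero]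
  letI : Module (S ⧸ Ideal.span {ε}) N := htor.module
  haveI := hmax
  letI : Field (S ⧸ Ideal.span {ε}) := Ideal.Quotient.field _
  let b := Module.Basis.ofVectorSpace (S ⧸ Ideal.span {ε}) N
  refine ⟨_, fun i => b i, ?_, ?_⟩
  · rw [eq_top_iff]
    intro x _
    have hx : x ∈ Submodule.span (S ⧸ Ideal.span {ε}) (Set.range ⇑b) := by
      rw [b.span_eq]; trivial
    refine Submodule.span_induction (p := fun y _ => y ∈ Submodule.span S (Set.range fun i => b i))
      (fun y hy => Submodule.subset_span hy) (Submodule.zero_mem _)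
      (fun y z _ _ hy hz => Submodule.add_mem _ hy hz) ?_ hx
    intro a y _ hy
    obtain ⟨r, rfl⟩ := Ideal.Quotient.mk_surjective a
    have : (Ideal.Quotient.mk (Ideal.span {ε}) r) • y = r • y := htor.mk_smul r y
    rw [this]
    exact Submodule.smul_mem _ r hy
  · intro c hc i
    have hli := b.linearIndependent
    rw [linearIndependent_iff] at hli
    set c' : _ →₀ (S ⧸ Ideal.span {ε}) :=
      c.mapRange (Ideal.Quotient.mk (Ideal.span {ε})) (map_zero _) with hc'def
    have hc' : Finsupp.linearCombination (S ⧸ Ideal.span {ε}) ⇑b c' = 0 := by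
      rw [Finsupp.linearCombination_apply, hc'def,
        Finsupp.sum_mapRange_index (h := fun j a => a • b j) (fun j => zero_smul _ _)]
      rw [← hc]
      exact Finsupp.sum_congr fun j _ => htor.mk_smul (c j) (b j)
    have h0 := hli c' hc'
    have : c' i = 0 := by rw [h0]; rfl
    rw [hc'def, Finsupp.mapRange_apply] at this
    exact (Ideal.Quotient.eq_zero_iff_mem).mp this

lemma exists_compl_sub (ε : S) (hmax : (Ideal.span {ε}).IsMaximal)
    (N : Type u) [AddCommGroup N] [Module S N] (tor : ∀ n : N, ε • n = 0)
    (B : Submodule S N) : ∃ W : Submodule S N, IsCompl B W := by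
  classical
  have htor : Module.IsTorsionBySet S N (Ideal.span {ε} : Ideal S) := by
    intro n s
    obtain ⟨c, hc⟩ := Ideal.mem_span_singleton'.mp s.2
    rw [← hc, mul_smul, tor n, smul_zero]
  letI : Module (S ⧸ Ideal.span {ε}) N := htor.module
  haveI := hmax
  letI : Field (S ⧸ Ideal.span {ε}) := Ideal.Quotient.field _
  let B' : Submodule (S ⧸ Ideal.span {ε}) N :=
    { carrier := B
      add_mem' := fun h1 h2 => B.add_mem h1 h2
      zero_mem' := B.zero_mem
      smul_mem' := by
        intro a x hx
        obtain ⟨r, rfl⟩ := Ideal.Quotient.mk_surjective a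
        have : (Ideal.Quotient.mk (Ideal.span {ε}) r) • x = r • x := htor.mk_smul r x
        rw [this]
        exact B.smul_mem r hx }
  obtain ⟨W', hW'⟩ := B'.exists_isCompl
  let W : Submodule S N :=
    { carrier := W'
      add_mem' := fun h1 h2 => W'.add_mem h1 h2
      zero_mem' := W'.zero_mem
      smul_mem' := by
        intro r x hx
        have : (Ideal.Quotient.mk (Ideal.span {ε}) r) • x = r • x := htor.mk_smul r x
        rw [← this]
        exact W'.smul_mem _ hx }
  refine ⟨W, ?_, ?_⟩
  · rw [Submodule.disjoint_def]
    intro x hxB hxW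
    have : x ∈ B' ⊓ W' := Submodule.mem_inf.mpr ⟨hxB, hxW⟩
    rw [disjoint_iff.mp hW'.1] at this
    exact this
  · rw [codisjoint_iff, eq_top_iff]
    intro x _
    have : x ∈ B' ⊔ W' := by rw [codisjoint_iff.mp hW'.2]; trivial
    obtain ⟨y, hy, z, hz, rfl⟩ := Submodule.mem_sup.mp this
    exact Submodule.mem_sup.mpr ⟨y, hy, z, hz, rfl⟩

/-- Every module over `S` (with `ε² = 0`, `ann ε = (ε)`, `(ε)` maximal) is a direct sum of
copies of `S` and copies of `S/(ε)`. -/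
lemma exists_model (ε : S) (hsq : ε * ε = 0)
    (hker : ∀ a : S, a * ε = 0 → a ∈ Ideal.span {ε})
    (hmax : (Ideal.span {ε}).IsMaximal)
    (M : Type u) [AddCommGroup M] [Module S M] :
    ∃ (I J : Type u) (ψ : ((I →₀ S) × (J →₀ (S ⧸ Ideal.span {ε}))) →ₗ[S] M),
      Function.Bijective ψ := by
  classical
  set ℓ : M →ₗ[S] M := LinearMap.lsmul S M ε with hℓ
  have hℓa : ∀ x : M, ℓ x = ε • x := fun x => rfl
  set A := LinearMap.ker ℓ with hA
  set B := LinearMap.range ℓ with hB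
  have hBA : B ≤ A := by
    rintro _ ⟨x, rfl⟩
    show ℓ (ℓ x) = 0
    rw [hℓa, hℓa, smul_smul, hsq, zero_smul]
  have htorB : ∀ n : ↥B, ε • n = 0 := by
    intro n
    apply Subtype.ext
    show ε • (n : M) = 0
    exact hBA n.2
  have htorA : ∀ n : ↥A, ε • n = 0 := by
    intro n
    apply Subtype.ext
    show ε • (n : M) = 0
    exact n.2
  obtain ⟨I, vB, hvBspan, hvBind⟩ := exists_basis_family ε hmax (↥B) htorB
  -- lifts of the basis of B
  have hm0 : ∀ i : I, ∃ y : M, ℓ y = (vB i : M) := fun i => (vB i).2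
  set m : I → M := fun i => Classical.choose (hm0 i) with hmdef
  have hm : ∀ i, ε • m i = (vB i : M) := fun i => Classical.choose_spec (hm0 i)
  -- complement of B inside A
  set B₀ : Submodule S ↥A := B.comap A.subtype with hB₀
  obtain ⟨W₀, hW₀⟩ := exists_compl_sub ε hmax (↥A) htorA B₀
  have htorW : ∀ n : ↥W₀, ε • n = 0 := by
    intro n
    apply Subtype.ext
    apply Subtype.ext
    show ε • ((n : ↥A) : M) = 0
    exact (n : ↥A).2
  obtain ⟨J, vW, hvWspan, hvWind⟩ := exists_basis_family ε hmax (↥W₀) htorW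
  set w : J → M := fun j => ((vW j : ↥A) : M) with hwdef
  have hwA : ∀ j, ε • w j = 0 := fun j => (vW j : ↥A).2
  set Φ₁ : (I →₀ S) →ₗ[S] M := Finsupp.linearCombination S m with hΦ₁
  set Φw : (J →₀ S) →ₗ[S] M := Finsupp.linearCombination S w with hΦw
  -- pushing sums from the subtypes into M
  have hBsum : ∀ a : I →₀ S,
      ((a.sum fun i s => s • vB i : ↥B) : M) = a.sum fun i s => s • (vB i : M) := by
    intro a
    show B.subtype (a.sum fun i s => s • vB i) = _
    rw [map_finsuppSum]
    exact Finsupp.sum_congr fun i _ => rfl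
  have hWsum : ∀ c : J →₀ S,
      (((c.sum fun j s => s • vW j : ↥W₀) : ↥A) : M) = c.sum fun j s => s • w j := by
    intro c
    show (A.subtype.comp W₀.subtype) (c.sum fun j s => s • vW j) = _
    rw [map_finsuppSum]
    exact Finsupp.sum_congr fun j _ => rfl
  -- ℓ of a Φ₁-combination
  have hℓΦ₁ : ∀ a : I →₀ S, ℓ (Φ₁ a) = a.sum fun i s => s • (vB i : M) := by
    intro a
    rw [hΦ₁, Finsupp.linearCombination_apply, map_finsuppSum]
    refine Finsupp.sum_congr fun i _ => ?_
    rw [map_smul, hℓa, hm i]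
  -- Φ₁ applied to ε-multiples
  have hΦ₁eps : ∀ a : I →₀ S, Φ₁ (ε • a) = a.sum fun i s => s • (vB i : M) := by
    intro a
    rw [hΦ₁, Finsupp.linearCombination_apply,
      Finsupp.sum_smul_index' (fun i => zero_smul S (m i))]
    refine Finsupp.sum_congr fun i _ => ?_
    rw [smul_eq_mul, mul_comm, mul_smul, hm i]
  -- ℓ kills Φw
  have hℓΦw : ∀ c : J →₀ S, ℓ (Φw c) = 0 := by
    intro c
    rw [hΦw, Finsupp.linearCombination_apply, map_finsuppSum, Finsupp.sum]
    exact Finset.sum_eq_zero fun j _ => by rw [map_smul, hℓa, hwA j, smul_zero]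
  -- C1 : generation
  have C1 : ∀ x : M, ∃ (a : I →₀ S) (c : J →₀ S), Φ₁ a + Φw c = x := by
    intro x
    have h1 : (⟨ℓ x, ⟨x, rfl⟩⟩ : ↥B) ∈ Submodule.span S (Set.range vB) := by
      rw [hvBspan]; trivial
    obtain ⟨a, ha⟩ := Finsupp.mem_span_range_iff_exists_finsupp.mp h1
    have ha' : (a.sum fun i s => s • (vB i : M)) = ℓ x := by
      rw [← hBsum a, ha]
    have key : ℓ (x - Φ₁ a) = 0 := by
      rw [map_sub, hℓΦ₁, ha', sub_self]
    have h2 : (⟨x - Φ₁ a, key⟩ : ↥A) ∈ B₀ ⊔ W₀ := by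
      rw [codisjoint_iff.mp hW₀.2]; trivial
    obtain ⟨b₀, hb₀, w₀, hw₀, hsum⟩ := Submodule.mem_sup.mp h2
    -- b₀ is a combination of the vB
    have hb₀B : (⟨(b₀ : M), hb₀⟩ : ↥B) ∈ Submodule.span S (Set.range vB) := by
      rw [hvBspan]; trivial
    obtain ⟨a', ha'2⟩ := Finsupp.mem_span_range_iff_exists_finsupp.mp hb₀B
    have hb₀M : (a'.sum fun i s => s • (vB i : M)) = (b₀ : M) := by
      rw [← hBsum a', ha'2]
    -- w₀ is a combination of the vW
    have hw₀W : (⟨w₀, hw₀⟩ : ↥W₀) ∈ Submodule.span S (Set.range vW) := by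
      rw [hvWspan]; trivial
    obtain ⟨c, hc⟩ := Finsupp.mem_span_range_iff_exists_finsupp.mp hw₀W
    have hw₀M : (c.sum fun j s => s • w j) = (w₀ : M) := by
      rw [← hWsum c, hc]
    refine ⟨a + ε • a', c, ?_⟩
    have hsumM : (b₀ : M) + (w₀ : M) = x - Φ₁ a := congrArg (Subtype.val) hsum
    rw [map_add, hΦ₁eps a', hb₀M]
    have hw₀M' : Φw c = (w₀ : M) := by
      rw [hΦw, Finsupp.linearCombination_apply]; exact hw₀M
    rw [hw₀M', add_assoc, hsumM]
    abel
  -- disjointness of B and the image of W₀ in M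
  have hdisj : ∀ x : M, x ∈ B → x ∈ W₀.map A.subtype → x = 0 := by
    intro x hxB hxW
    obtain ⟨xa, hxaW, rfl⟩ := hxW
    have hxaB : xa ∈ B₀ := hxB
    have : xa ∈ B₀ ⊓ W₀ := ⟨hxaB, hxaW⟩
    rw [disjoint_iff.mp hW₀.1] at this
    rw [this]
    rfl
  -- C2 : relations
  have C2 : ∀ (a : I →₀ S) (c : J →₀ S), Φ₁ a + Φw c = 0 →
      a = 0 ∧ ∀ j, c j ∈ Ideal.span {ε} := by
    intro a c h0
    have hεa : ℓ (Φ₁ a) = 0 := by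
      have := congrArg ℓ h0
      rw [map_add, hℓΦw, add_zero, map_zero] at this
      exact this
    have hBz : (a.sum fun i s => s • vB i : ↥B) = 0 := by
      apply Subtype.ext
      rw [hBsum a]
      rw [hℓΦ₁] at hεa
      exact hεa
    have hadiv : ∀ i, a i ∈ Ideal.span {ε} := hvBind a hBz
    obtain ⟨d, hd⟩ := finsupp_eps_divide ε a hadiv
    -- Φ₁ a lies in B
    have hΦ₁B : Φ₁ a ∈ B := by
      rw [hd, hΦ₁eps d, ← hBsum d]
      exact ((d.sum fun i s => s • vB i : ↥B)).2
    -- Φw c lies in the image of W₀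
    have hΦwW : Φw c ∈ W₀.map A.subtype := by
      rw [hΦw, Finsupp.linearCombination_apply]
      apply Submodule.sum_mem
      intro j _
      apply Submodule.smul_mem
      exact ⟨(vW j : ↥A), (vW j).2, rfl⟩
    -- both are zero
    have hΦ₁0 : Φ₁ a = 0 := by
      have hneg : Φ₁ a = -(Φw c) := by rw [eq_neg_iff_add_eq_zero]; exact h0
      apply hdisj _ hΦ₁B
      rw [hneg]
      exact Submodule.neg_mem _ hΦwW
    have hΦw0 : Φw c = 0 := by
      rw [hΦ₁0, zero_add] at h0
      exact h0
    constructor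
    · -- a = 0
      have hB0 : (d.sum fun i s => s • vB i : ↥B) = 0 := by
        apply Subtype.ext
        rw [hBsum d, ← hΦ₁eps d, ← hd, hΦ₁0]
        rfl
      have hddiv := hvBind d hB0
      ext i
      have h1 : a i = ε * d i := by rw [hd]; rfl
      obtain ⟨e, he⟩ := Ideal.mem_span_singleton'.mp (hddiv i)
      rw [h1, ← he]
      show ε * (e * ε) = (0 : I →₀ S) i
      rw [mul_comm e ε, ← mul_assoc, hsq, zero_mul]
      rfl
    · -- c coefficients in (ε)
      have hW0 : (c.sum fun j s => s • vW j : ↥W₀) = 0 := by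
        apply Subtype.ext
        apply Subtype.ext
        rw [hWsum c]
        rw [hΦw, Finsupp.linearCombination_apply] at hΦw0
        exact hΦw0
      exact hvWind c hW0
  -- now build the isomorphism
  set Iε := Ideal.span {ε} with hIεdef
  have hν : ∀ j, Iε ≤ LinearMap.ker (LinearMap.toSpanSingleton S M (w j)) := by
    intro j x hx
    obtain ⟨cc, hcc⟩ := Ideal.mem_span_singleton'.mp hx
    show x • w j = 0
    rw [← hcc, mul_smul, hwA j, smul_zero]
  set Ψ₂ : (J →₀ (S ⧸ Iε)) →ₗ[S] M :=
    Finsupp.lsum S (fun j => Iε.liftQ (LinearMap.toSpanSingleton S M (w j)) (hν j)) with hΨ₂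
  have hΨ₂mk : ∀ c : J →₀ S,
      Ψ₂ (Finsupp.mapRange.linearMap Iε.mkQ c) = Φw c := by
    intro c
    rw [hΨ₂]
    rw [Finsupp.lsum_apply]
    show (Finsupp.mapRange ⇑Iε.mkQ (map_zero _) c).sum
        (fun j x => (Iε.liftQ (LinearMap.toSpanSingleton S M (w j)) (hν j)) x) = _
    rw [Finsupp.sum_mapRange_index (fun j => map_zero _)]
    rw [hΦw, Finsupp.linearCombination_apply]
    refine Finsupp.sum_congr fun j _ => ?_
    rfl
  refine ⟨I, J, Φ₁.coprod Ψ₂, ?_, ?_⟩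
  · -- injective
    have hz : ∀ z : (I →₀ S) × (J →₀ (S ⧸ Iε)), Φ₁.coprod Ψ₂ z = 0 → z = 0 := by
      rintro ⟨a, u⟩ hu
      obtain ⟨c, rfl⟩ := mapRange_linearMap_surjective Iε.mkQ
        (Submodule.mkQ_surjective Iε) J u
      rw [LinearMap.coprod_apply, hΨ₂mk] at hu
      obtain ⟨ha, hc⟩ := C2 a c hu
      refine Prod.ext ha ?_
      show Finsupp.mapRange.linearMap Iε.mkQ c = 0
      ext j
      show Iε.mkQ (c j) = 0
      rw [Submodule.mkQ_apply, Submodule.Quotient.mk_eq_zero]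
      exact hc j
    intro x y hxy
    have : Φ₁.coprod Ψ₂ (x - y) = 0 := by rw [map_sub, hxy, sub_self]
    have := hz _ this
    exact sub_eq_zero.mp this
  · -- surjective
    intro x
    obtain ⟨a, c, hac⟩ := C1 x
    exact ⟨(a, Finsupp.mapRange.linearMap Iε.mkQ c), by
      rw [LinearMap.coprod_apply, hΨ₂mk]; exact hac⟩

lemma sgp_ses (ε : S) (hsq : ε * ε = 0)
    (hker : ∀ a : S, a * ε = 0 → a ∈ Ideal.span {ε})
    (hmax : (Ideal.span {ε}).IsMaximal)
    (M : Type u) [AddCommGroup M] [Module S M] :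
    ∃ (P : ModuleCat.{u} S) (f : M →ₗ[S] P) (g : P →ₗ[S] M),
      Module.Projective S P ∧ Function.Injective f ∧ Function.Surjective g ∧
      LinearMap.range f = LinearMap.ker g := by
  classical
  obtain ⟨I, J, ψ, hψ⟩ := exists_model ε hsq hker hmax M
  set e : ((I →₀ S) × (J →₀ (S ⧸ Ideal.span {ε}))) ≃ₗ[S] M := LinearEquiv.ofBijective ψ hψ with hedef
  -- μ : S⧸(ε) → S, "multiplication by ε"
  have hμ0 : Ideal.span {ε} ≤ LinearMap.ker (LinearMap.toSpanSingleton S S ε) := by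
    intro x hx
    obtain ⟨c, hc⟩ := Ideal.mem_span_singleton'.mp hx
    show x • ε = 0
    rw [← hc, smul_eq_mul, mul_assoc, hsq, mul_zero]
  set μ : (S ⧸ Ideal.span {ε}) →ₗ[S] S := (Ideal.span {ε}).liftQ (LinearMap.toSpanSingleton S S ε) hμ0 with hμdef
  have hμmk : ∀ a : S, μ ((Ideal.span {ε}).mkQ a) = a * ε := fun a => rfl
  have hμinj : ∀ x, μ x = 0 → x = 0 := by
    intro x hx
    obtain ⟨a, rfl⟩ := Submodule.mkQ_surjective (Ideal.span {ε}) x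
    rw [hμmk] at hx
    rw [Submodule.mkQ_apply, Submodule.Quotient.mk_eq_zero]
    exact hker a hx
  set fT : ((I →₀ S) × (J →₀ (S ⧸ Ideal.span {ε}))) →ₗ[S] (((I →₀ S) × (I →₀ S)) × (J →₀ S)) :=
    (LinearMap.inl S (I →₀ S) (I →₀ S)).prodMap (Finsupp.mapRange.linearMap μ) with hfT
  set gT : (((I →₀ S) × (I →₀ S)) × (J →₀ S)) →ₗ[S] ((I →₀ S) × (J →₀ (S ⧸ Ideal.span {ε}))) :=
    (LinearMap.snd S (I →₀ S) (I →₀ S)).prodMap (Finsupp.mapRange.linearMap (Ideal.span {ε}).mkQ) with hgT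
  refine ⟨ModuleCat.of S (((I →₀ S) × (I →₀ S)) × (J →₀ S)),
    fT ∘ₗ (e.symm : M →ₗ[S] _), e.toLinearMap ∘ₗ gT, (inferInstance : Module.Projective S (((I →₀ S) × (I →₀ S)) × (J →₀ S))), ?_, ?_, ?_⟩
  · -- injectivity
    have hfTz : ∀ z : (I →₀ S) × (J →₀ (S ⧸ Ideal.span {ε})), fT z = 0 → z = 0 := by
      rintro ⟨a, u⟩ h
      have h' : ((a, (0 : I →₀ S)), Finsupp.mapRange.linearMap μ u)
          = (((0 : I →₀ S), (0 : I →₀ S)), (0 : J →₀ S)) := h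
      have ha : a = 0 := congrArg (fun z => z.1.1) h'
      have hu2 : Finsupp.mapRange.linearMap μ u = 0 := congrArg (fun z => z.2) h'
      refine Prod.ext ha ?_
      show u = 0
      ext j
      have h3 := congrArg (fun z => z j) hu2
      simp only [Finsupp.mapRange.linearMap_apply, Finsupp.mapRange_apply, Finsupp.coe_zero,
        Pi.zero_apply] at h3
      rw [hμinj _ h3]
      rfl
    have hfTinj : Function.Injective fT := by
      intro x y hxy
      have hz : fT (x - y) = 0 := by rw [map_sub, hxy, sub_self]
      exact sub_eq_zero.mp (hfTz _ hz)
    exact hfTinj.comp e.symm.injective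
  · -- surjectivity
    have hgTsurj : Function.Surjective gT := by
      rintro ⟨a, u⟩
      obtain ⟨c, hc⟩ := mapRange_linearMap_surjective (Ideal.span {ε}).mkQ (Submodule.mkQ_surjective (Ideal.span {ε})) J u
      exact ⟨((0, a), c), Prod.ext rfl hc⟩
    exact e.surjective.comp hgTsurj
  · -- range f = ker g
    have h1 : LinearMap.range (fT ∘ₗ (e.symm : M →ₗ[S] _)) = LinearMap.range fT := by
      rw [LinearMap.range_comp, LinearEquiv.range, Submodule.map_top]
    have h2 : LinearMap.ker (e.toLinearMap ∘ₗ gT) = LinearMap.ker gT := by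
      rw [LinearMap.ker_comp, LinearEquiv.ker, Submodule.comap_bot]
    rw [h1, h2]
    apply le_antisymm
    · rintro _ ⟨⟨a, u⟩, rfl⟩
      show gT (fT (a, u)) = 0
      have : fT (a, u) = ((a, 0), Finsupp.mapRange.linearMap μ u) := rfl
      rw [this]
      have : gT ((a, 0), Finsupp.mapRange.linearMap μ u)
          = (0, Finsupp.mapRange.linearMap (Ideal.span {ε}).mkQ (Finsupp.mapRange.linearMap μ u)) := rfl
      rw [this]
      refine Prod.ext rfl ?_
      show Finsupp.mapRange.linearMap (Ideal.span {ε}).mkQ (Finsupp.mapRange.linearMap μ u) = 0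
      ext j
      simp only [Finsupp.mapRange.linearMap_apply, Finsupp.mapRange_apply, Finsupp.coe_zero,
        Pi.zero_apply]
      obtain ⟨a', ha'⟩ := Submodule.mkQ_surjective (Ideal.span {ε}) (u j)
      rw [← ha', hμmk, Submodule.mkQ_apply, Submodule.Quotient.mk_eq_zero]
      exact Ideal.mem_span_singleton'.mpr ⟨a', rfl⟩
    · rintro ⟨⟨x1, x2⟩, x3⟩ hx
      have hx' : (x2, Finsupp.mapRange.linearMap (Ideal.span {ε}).mkQ x3)
          = (0 : (I →₀ S) × (J →₀ (S ⧸ Ideal.span {ε}))) := hx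
      obtain ⟨hx2, hx3⟩ := Prod.ext_iff.mp hx'
      have hx3' : ∀ j, x3 j ∈ Ideal.span {ε} := by
        intro j
        have := congrArg (fun z => z j) hx3
        simp only [Finsupp.mapRange.linearMap_apply, Finsupp.mapRange_apply, Finsupp.coe_zero,
          Pi.zero_apply] at this
        rw [← Submodule.Quotient.mk_eq_zero (Ideal.span {ε})]
        exact this
      obtain ⟨d, hd⟩ := finsupp_eps_divide ε x3 hx3'
      refine ⟨(x1, Finsupp.mapRange.linearMap (Ideal.span {ε}).mkQ d), ?_⟩
      show ((x1, 0), Finsupp.mapRange.linearMap μ (Finsupp.mapRange.linearMap (Ideal.span {ε}).mkQ d))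
        = ((x1, x2), x3)
      refine Prod.ext (Prod.ext rfl hx2.symm) ?_
      ext j
      simp only [Finsupp.mapRange.linearMap_apply, Finsupp.mapRange_apply]
      rw [hμmk, hd]
      show d j * ε = (ε • d) j
      rw [Finsupp.smul_apply, smul_eq_mul, mul_comm]

lemma injective_of_projective (ε : S) (hsq : ε * ε = 0)
    (hker : ∀ a : S, a * ε = 0 → a ∈ Ideal.span {ε})
    (hideal : ∀ I : Ideal S, ∃ a, I = Ideal.span {a})
    (hloc : ∀ a : S, a ∉ Ideal.span {ε} → IsUnit a)
    (Q : Type u) [AddCommGroup Q] [Module S Q] (hQ : Module.Projective S Q) :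
    Module.Injective S Q := by
  classical
  apply Module.Baer.injective
  intro Idl g
  obtain ⟨a, rfl⟩ := hideal Idl
  by_cases ha : a ∈ Ideal.span {ε}
  · obtain ⟨c, hc⟩ := Ideal.mem_span_singleton'.mp ha
    by_cases hc' : c ∈ Ideal.span {ε}
    · -- a = 0
      obtain ⟨d, hd⟩ := Ideal.mem_span_singleton'.mp hc'
      have ha0 : a = 0 := by
        rw [← hc, ← hd, mul_assoc, hsq, mul_zero]
      refine ⟨0, ?_⟩
      intro x hx
      have hx0 : x = 0 := by
        rw [ha0, Ideal.span_singleton_eq_bot.mpr rfl] at hx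
        exact hx
      have hmk : (⟨x, hx⟩ : ↥(Ideal.span {a})) = 0 := Subtype.ext hx0
      rw [hmk, map_zero]
      rfl
    · -- span {a} = span {ε}
      have hcu : IsUnit c := hloc c hc'
      have hspan : Ideal.span {a} = Ideal.span ({ε} : Set S) := by
        rw [← hc]
        exact Ideal.span_singleton_mul_left_unit hcu ε
      have hεmem : ε ∈ Ideal.span {a} := by rw [hspan]; exact Ideal.subset_span rfl
      set x0 := g ⟨ε, hεmem⟩ with hx0def
      have hεx0 : ε • x0 = 0 := by
        rw [hx0def, ← map_smul]
        have h1 : ε • (⟨ε, hεmem⟩ : ↥(Ideal.span {a})) = 0 := by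
          apply Subtype.ext
          show ε • ε = 0
          rw [smul_eq_mul, hsq]
        rw [h1, map_zero]
      obtain ⟨s, hs⟩ := hQ.out
      have hnull : ∀ t, (s x0) t ∈ Ideal.span {ε} := by
        intro t
        have h2 : ε • s x0 = 0 := by rw [← map_smul, hεx0, map_zero]
        have h3 : ε * (s x0) t = 0 := by
          have := congrArg (fun z => z t) h2
          simpa using this
        exact hker _ (by rw [mul_comm]; exact h3)
      obtain ⟨d, hd⟩ := finsupp_eps_divide ε (s x0) hnull
      set y := Finsupp.linearCombination S (id : Q → Q) d with hydef
      have hy : ε • y = x0 := by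
        rw [hydef, ← map_smul, ← hd]
        exact hs x0
      refine ⟨LinearMap.toSpanSingleton S Q y, ?_⟩
      intro x hx
      have hx' : x ∈ Ideal.span ({ε} : Set S) := by rw [← hspan]; exact hx
      obtain ⟨c', hc'2⟩ := Ideal.mem_span_singleton'.mp hx'
      have hxel : (⟨x, hx⟩ : ↥(Ideal.span {a})) = c' • ⟨ε, hεmem⟩ := by
        apply Subtype.ext
        show x = c' • ε
        rw [smul_eq_mul, hc'2]
      show x • y = g ⟨x, hx⟩
      rw [hxel, map_smul, ← hx0def, ← hc'2, mul_smul, hy]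
  · -- a is a unit, the ideal is everything
    have htop : Ideal.span {a} = ⊤ := Ideal.span_singleton_eq_top.mpr (hloc a ha)
    refine ⟨g ∘ₗ LinearMap.codRestrict (Ideal.span {a}) LinearMap.id
      (fun x => by rw [htop]; trivial), ?_⟩
    intro x hx
    rfl

lemma extVanishes_of_injective_s17 (M Q : Type u)
    [AddCommGroup M] [Module S M] [AddCommGroup Q] [Module S Q]
    (hQ : Module.Injective S Q) : extVanishes S 1 M Q := by
  classical
  set MM := ModuleCat.of S M with hMM
  set QQ := ModuleCat.of S Q with hQQ
  let P : ProjectiveResolution MM := ProjectiveResolution.of MM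
  have hexact : (P.complex.linearYonedaObj S QQ).ExactAt 1 := by
    rw [HomologicalComplex.exactAt_iff' _ 0 1 2 (by simp) (by simp)]
    rw [ShortComplex.moduleCat_exact_iff]
    intro φ hφ
    let φm : P.complex.X 1 ⟶ QQ := φ
    have hφ' : P.complex.d 2 1 ≫ φm = 0 := hφ
    have hex := P.exact_succ 0
    rw [ShortComplex.moduleCat_exact_iff] at hex
    have hle : LinearMap.ker (P.complex.d 1 0).hom ≤ LinearMap.ker φm.hom := by
      intro x hx
      obtain ⟨y, hy⟩ := hex x hx
      show φm x = 0
      rw [← hy]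
      exact congrArg (fun (h : P.complex.X 2 ⟶ QQ) => h.hom y) hφ'
    let φ'' := Submodule.liftQ (LinearMap.ker (P.complex.d 1 0).hom) φm.hom hle
    let eqv := LinearMap.quotKerEquivRange (P.complex.d 1 0).hom
    let φ' : ↥(LinearMap.range (P.complex.d 1 0).hom) →ₗ[S] QQ := φ'' ∘ₗ (eqv.symm : _ →ₗ[S] _)
    obtain ⟨h, hh⟩ := hQ.out (LinearMap.range (P.complex.d 1 0).hom).subtype
      (Submodule.injective_subtype _) φ'
    refine ⟨ModuleCat.ofHom h, ?_⟩
    show P.complex.d 1 0 ≫ ModuleCat.ofHom h = φm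
    apply ModuleCat.hom_ext
    apply LinearMap.ext
    intro x
    show h (P.complex.d 1 0 x) = φm x
    have hmem : P.complex.d 1 0 x ∈ LinearMap.range (P.complex.d 1 0).hom :=
      LinearMap.mem_range_self _ x
    have h1 : h (P.complex.d 1 0 x)
        = φ' ⟨P.complex.d 1 0 x, hmem⟩ := hh ⟨P.complex.d 1 0 x, hmem⟩
    rw [h1]
    have h2 : eqv.symm ⟨P.complex.d 1 0 x, hmem⟩ = Submodule.Quotient.mk x := by
      rw [LinearEquiv.symm_apply_eq]
      exact Subtype.ext (LinearMap.quotKerEquivRange_apply_mk _ x).symm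
    show φ'' (eqv.symm ⟨P.complex.d 1 0 x, hmem⟩) = φm x
    rw [h2]
    exact Submodule.liftQ_apply _ φm.hom x
  have hzero := (HomologicalComplex.exactAt_iff_isZero_homology _ 1).mp hexact
  have hz : Limits.IsZero (((Ext S (ModuleCat.{u} S) 1).obj (Opposite.op MM)).obj QQ) :=
    hzero.of_iso (P.isoExt 1 QQ)
  have hid := (Limits.IsZero.iff_id_eq_zero _).mp hz
  constructor
  intro x y
  have hx : x = 0 := by
    have := congrArg (fun f => ModuleCat.Hom.hom f x) hid
    exact this
  have hy : y = 0 := by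
    have := congrArg (fun f => ModuleCat.Hom.hom f y) hid
    exact this
  rw [hx, hy]

end Aux

/-- For a principal ideal domain `R` and a nonzero prime ideal `p`, the ring `R/p²` is local and
SG-semisimple. -/
theorem quotient_prime_sq_sgSemisimple (R : Type u) [CommRing R] [IsDomain R]
    [IsPrincipalIdealRing R] (p : Ideal R) (hp : p.IsPrime) (hp0 : p ≠ ⊥) :
    IsLocalRing (R ⧸ p ^ 2) ∧ SGSemisimple (R ⧸ p ^ 2) := by
  classical
  obtain ⟨π, hπ⟩ := (IsPrincipalIdealRing.principal p).principal
  rw [Ideal.submodule_span_eq] at hπ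
  have hπ0 : π ≠ 0 := by
    intro h
    apply hp0
    rw [hπ, h, Ideal.span_singleton_eq_bot.mpr rfl]
  have hπprime : Prime π := by
    rw [← Ideal.span_singleton_prime hπ0, ← hπ]
    exact hp
  have hp2 : p ^ 2 = Ideal.span {π * π} := by
    rw [hπ, Ideal.span_singleton_pow, pow_two]
  have hp2top : p ^ 2 ≠ ⊤ := by
    intro h
    apply hp.ne_top
    apply eq_top_iff.mpr
    intro x _
    exact (Ideal.pow_le_self (two_ne_zero)) (h ▸ Submodule.mem_top)
  haveI : Nontrivial (R ⧸ p ^ 2) := Ideal.Quotient.nontrivial_iff.mpr hp2top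
  set mk := Ideal.Quotient.mk (p ^ 2) with hmkdef
  set ε := mk π with hεdef
  -- ε² = 0
  have hsq : ε * ε = 0 := by
    rw [hεdef, ← map_mul, Ideal.Quotient.eq_zero_iff_mem, hp2]
    exact Ideal.subset_span rfl
  -- annihilator of ε is (ε)
  have hker : ∀ a : R ⧸ p ^ 2, a * ε = 0 → a ∈ Ideal.span {ε} := by
    intro a ha
    obtain ⟨x, rfl⟩ := Ideal.Quotient.mk_surjective a
    rw [hεdef, ← map_mul, Ideal.Quotient.eq_zero_iff_mem, hp2] at ha
    obtain ⟨c, hc⟩ := Ideal.mem_span_singleton'.mp ha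
    have hx : x = c * π := by
      have h1 : (x - c * π) * π = 0 := by
        rw [sub_mul, ← hc]; ring
      rcases mul_eq_zero.mp h1 with h | h
      · exact sub_eq_zero.mp h
      · exact absurd h hπ0
    rw [hx, map_mul]
    exact Ideal.mem_span_singleton'.mpr ⟨mk c, rfl⟩
  -- elements outside (ε) are units
  have hloc : ∀ a : R ⧸ p ^ 2, a ∉ Ideal.span {ε} → IsUnit a := by
    intro a ha
    obtain ⟨x, rfl⟩ := Ideal.Quotient.mk_surjective a
    have hxp : x ∉ p := by
      intro hx
      apply ha
      rw [hπ] at hx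
      obtain ⟨c, hc⟩ := Ideal.mem_span_singleton'.mp hx
      rw [← hc, map_mul]
      exact Ideal.mem_span_singleton'.mpr ⟨mk c, rfl⟩
    have hpmax : p.IsMaximal := by
      haveI := hp
      exact IsPrime.to_maximal_ideal hp0
    obtain ⟨y, i, hi, hyi⟩ := hpmax.exists_inv hxp
    -- y * x + i = 1, i ∈ p
    rw [hπ] at hi
    obtain ⟨c, hc⟩ := Ideal.mem_span_singleton'.mp hi
    -- in the quotient : mk y * mk x = 1 - mk c * ε
    have h1 : mk y * mk x = 1 - mk c * ε := by
      have hyx : (y * x : R) = 1 - c * π := by rw [← hyi, hc]; ring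
      rw [hεdef, ← map_mul, hyx, map_sub, map_one, map_mul]
    have hunit : ∀ z : R ⧸ p ^ 2, (1 + z * ε) * (1 - z * ε) = 1 := by
      intro z
      have hz : (1 + z * ε) * (1 - z * ε) = 1 - (z * z) * (ε * ε) := by ring
      rw [hz, hsq, mul_zero, sub_zero]
    have h2 : (mk y * (1 + mk c * ε)) * mk x = 1 := by
      calc (mk y * (1 + mk c * ε)) * mk x = (1 + mk c * ε) * (mk y * mk x) := by ring
        _ = (1 + mk c * ε) * (1 - mk c * ε) := by rw [h1]
        _ = 1 := hunit (mk c)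
    exact IsUnit.of_mul_eq_one _ ((mul_comm _ _).trans h2)
  -- 1 ∉ (ε)
  have h1ε : (1 : R ⧸ p ^ 2) ∉ Ideal.span {ε} := by
    intro h
    obtain ⟨c, hc⟩ := Ideal.mem_span_singleton'.mp h
    have : (1 : R ⧸ p ^ 2) = 0 := by
      calc (1 : R ⧸ p ^ 2) = 1 * 1 := (one_mul 1).symm
        _ = (c * ε) * (c * ε) := by rw [hc]
        _ = c * c * (ε * ε) := by ring
        _ = 0 := by rw [hsq, mul_zero]
    exact one_ne_zero this
  -- (ε) is maximal
  have hmax : (Ideal.span {ε}).IsMaximal := by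
    rw [Ideal.isMaximal_iff]
    refine ⟨h1ε, ?_⟩
    intro J b _ hb hbJ
    obtain ⟨binv, hbinv⟩ := IsUnit.exists_right_inv (hloc b hb)
    rw [← hbinv]
    exact J.mul_mem_right binv hbJ
  -- local ring
  have hlocal : IsLocalRing (R ⧸ p ^ 2) := by
    apply IsLocalRing.of_isUnit_or_isUnit_one_sub_self
    intro a
    by_cases ha : a ∈ Ideal.span {ε}
    · right
      apply hloc
      intro h
      apply h1ε
      have : (1 : R ⧸ p ^ 2) = (1 - a) + a := by ring
      rw [this]
      exact Ideal.add_mem _ h ha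
    · exact Or.inl (hloc a ha)
  refine ⟨hlocal, ?_⟩
  -- SG-semisimple
  haveI : IsPrincipalIdealRing (R ⧸ p ^ 2) :=
    IsPrincipalIdealRing.of_surjective mk Ideal.Quotient.mk_surjective
  have hideal : ∀ I : Ideal (R ⧸ p ^ 2), ∃ a, I = Ideal.span {a} := by
    intro I
    obtain ⟨a, ha⟩ := (IsPrincipalIdealRing.principal I).principal
    rw [Ideal.submodule_span_eq] at ha
    exact ⟨a, ha⟩
  intro M
  constructor
  · exact sgp_ses ε hsq hker hmax M
  · intro Q hQproj
    exact extVanishes_of_injective_s17 _ _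
      (injective_of_projective ε hsq hker hideal hloc Q hQproj)
end
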